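/- arXiv:0910.5429 — 2 statements merged into one kernel-verified Lean document; each statement's English description precedes it below -/
import Mathlib

section
/- Three-vertex join decomposition of the graph polynomial: if G is obtained by gluing graphs G' and G'' along three vertices u, v, w (G' ∩ G'' = {u,v,w}), then Ψ_G = Φ'^{{u},{v},{w}} · Ψ_{G''} + Φ'^{{u},{v,w}} · Φ''^{{v},{u,w}} + Φ'^{{u},{v,w}} · Φ''^{{w},{u,v}} + Φ'^{{v},{u,w}} · Φ''^{{u},{v,w}} + Φ'^{{v},{u,w}} · Φ''^{{w},{u,v}} + Φ'^{{w},{u,v}} · Φ''^{{u},{v,w}} + Φ'^{{w},{u,v}} · Φ''^{{v},{u,w}} + Ψ_{G'} · Φ''^{{u},{v},{w}}, where Φ'^P, Φ''^P denote spanning forest polynomials of G', G'' respectively. -/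
/-- A finite multigraph with oriented edges: each edge has a source and a target vertex.
Self-loops (src = tgt) and parallel edges are allowed. -/
structure Multigraph (E V : Type*) where
  src : E → V
  tgt : E → V

namespace Multigraph

variable {E V : Type*}

/-- Two vertices are adjacent via an edge of the subset `F`. -/
def Adj (G : Multigraph E V) (F : Finset E) (a b : V) : Prop :=
  ∃ e ∈ F, (G.src e = a ∧ G.tgt e = b) ∨ (G.src e = b ∧ G.tgt e = a)

/-- Reachability (connectivity) using only edges in `F`. -/
def Reach (G : Multigraph E V) (F : Finset E) : V → V → Prop :=
  Relation.ReflTransGen (G.Adj F)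

/-- `T` is (the edge set of) a spanning tree of `G`: it connects all vertices and has
`|V| - 1` edges. -/
def IsSpanningTree (G : Multigraph E V) [Fintype V] (T : Finset E) : Prop :=
  (∀ v w : V, G.Reach T v w) ∧ T.card + 1 = Fintype.card V

/-- `G` is connected. -/
def Connected (G : Multigraph E V) [Fintype E] [Fintype V] : Prop :=
  ∀ v w : V, G.Reach Finset.univ v w

/-- The signed incidence matrix entry of edge `e` at vertex `v`:
`+1` if `e` begins at `v`, `-1` if `e` ends at `v`, `0` otherwise (in particular `0`
for self-loops). -/
def inc (G : Multigraph E V) (R : Type*) [Ring R] [DecidableEq V] (e : E) (v : V) : R :=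
  (if G.src e = v then 1 else 0) - (if G.tgt e = v then 1 else 0)

open Classical in
/-- The Kirchhoff (graph) polynomial `Ψ_G = Σ_T Π_{e ∉ T} α_e`, sum over spanning trees. -/
noncomputable def kirchhoff (G : Multigraph E V) [Fintype E] [DecidableEq E] [Fintype V] :
    MvPolynomial E ℚ :=
  ∑ T : Finset E, if G.IsSpanningTree T then ∏ e ∈ Tᶜ, MvPolynomial.X e else 0

/-- `F` is a spanning forest of `G` whose trees realize the partition `parts` of a subset of
the vertices: it has `|V| - |parts|` edges (forcing acyclicity), vertices in the same part
are connected, vertices in different parts are disconnected, and every vertex lies in the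
tree of some part. -/
def IsSpanningForest (G : Multigraph E V) [Fintype V] (parts : Finset (Finset V))
    (F : Finset E) : Prop :=
  F.card + parts.card = Fintype.card V ∧
  (∀ p ∈ parts, ∀ v ∈ p, ∀ w ∈ p, G.Reach F v w) ∧
  (∀ p ∈ parts, ∀ q ∈ parts, p ≠ q → ∀ v ∈ p, ∀ w ∈ q, ¬ G.Reach F v w) ∧
  (∀ v : V, ∃ p ∈ parts, ∃ w ∈ p, G.Reach F v w)

open Classical in
/-- The spanning forest polynomial `Φ^P_G = Σ_F Π_{e ∉ F} α_e`. -/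
noncomputable def forestPoly (G : Multigraph E V) [Fintype E] [DecidableEq E] [Fintype V]
    (parts : Finset (Finset V)) : MvPolynomial E ℚ :=
  ∑ F : Finset E, if G.IsSpanningForest parts F then ∏ e ∈ Fᶜ, MvPolynomial.X e else 0

end Multigraph

/-- `parts` is a set partition (of the union of its parts): parts are nonempty and
pairwise disjoint. -/
def IsSetPartition {V : Type*} (parts : Finset (Finset V)) : Prop :=
  ∅ ∉ parts ∧ ∀ p ∈ parts, ∀ q ∈ parts, p ≠ q → Disjoint p q

/-- `parts` is a set partition of the finite vertex set `W`. -/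
def IsPartitionOf {V : Type*} (W : Finset V) (parts : Finset (Finset V)) : Prop :=
  IsSetPartition parts ∧ (∀ p ∈ parts, p ⊆ W) ∧ ∀ v ∈ W, ∃ p ∈ parts, v ∈ p

namespace Multigraph

variable {E V : Type*} (G : Multigraph E V)

theorem adj_symm {F : Finset E} {a b : V} (h : G.Adj F a b) : G.Adj F b a := by
  obtain ⟨e, he, h⟩ := h; exact ⟨e, he, by tauto⟩

theorem reach_refl {F : Finset E} (a : V) : G.Reach F a a := Relation.ReflTransGen.refl

theorem reach_symm {F : Finset E} {a b : V} (h : G.Reach F a b) : G.Reach F b a := by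
  induction h with
  | refl => exact Relation.ReflTransGen.refl
  | tail _ hstep ih => exact Relation.ReflTransGen.head (G.adj_symm hstep) ih

theorem reach_trans {F : Finset E} {a b c : V} (h : G.Reach F a b) (h' : G.Reach F b c) :
    G.Reach F a c := Relation.ReflTransGen.trans h h'

theorem reach_equivalence (F : Finset E) : Equivalence (G.Reach F) :=
  ⟨G.reach_refl, G.reach_symm, G.reach_trans⟩

theorem quot_reach_eq {F : Finset E} {a b : V} :
    Quot.mk (G.Reach F) a = Quot.mk (G.Reach F) b ↔ G.Reach F a b :=
  Quot.eq.trans (Equivalence.eqvGen_iff (G.reach_equivalence F))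

theorem reach_mono {F F' : Finset E} (hFF : F ⊆ F') {a b : V} (h : G.Reach F a b) :
    G.Reach F' a b := by
  refine Relation.ReflTransGen.mono (fun x y hxy => ?_) _ _ h
  obtain ⟨e, he, h⟩ := hxy; exact ⟨e, hFF he, h⟩

theorem adj_reach {F : Finset E} {a b : V} (h : G.Adj F a b) : G.Reach F a b :=
  Relation.ReflTransGen.single h

theorem reach_empty {a b : V} (h : G.Reach (∅ : Finset E) a b) : a = b := by
  induction h with
  | refl => rfl
  | tail _ hstep ih => obtain ⟨e, he, _⟩ := hstep; simp at he

/-- Reachability after inserting an edge: at most the classes of the two endpoints merge. -/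
theorem reach_insert [DecidableEq E] {F : Finset E} {e : E} {a b : V}
    (h : G.Reach (insert e F) a b) :
    G.Reach F a b ∨ (G.Reach F a (G.src e) ∧ G.Reach F (G.tgt e) b) ∨
      (G.Reach F a (G.tgt e) ∧ G.Reach F (G.src e) b) := by
  induction h with
  | refl => exact Or.inl (G.reach_refl a)
  | @tail x y hx hstep ih =>
    obtain ⟨e', he', hor⟩ := hstep
    rcases Finset.mem_insert.mp he' with rfl | he'
    · rcases hor with ⟨h1, h2⟩ | ⟨h1, h2⟩
      · subst h1; subst h2
        rcases ih with h | ⟨ha, hb⟩ | ⟨ha, hb⟩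
        · exact Or.inr (Or.inl ⟨h, G.reach_refl _⟩)
        · exact Or.inr (Or.inl ⟨ha, G.reach_refl _⟩)
        · exact Or.inl (ha.trans (G.reach_refl _))
      · subst h1; subst h2
        rcases ih with h | ⟨ha, hb⟩ | ⟨ha, hb⟩
        · exact Or.inr (Or.inr ⟨h, G.reach_refl _⟩)
        · exact Or.inl ha
        · exact Or.inr (Or.inr ⟨ha, G.reach_refl _⟩)
    · have hxy : G.Reach F x y := G.adj_reach ⟨e', he', hor⟩
      rcases ih with h | ⟨ha, hb⟩ | ⟨ha, hb⟩
      · exact Or.inl (h.trans hxy)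
      · exact Or.inr (Or.inl ⟨ha, hb.trans hxy⟩)
      · exact Or.inr (Or.inr ⟨ha, hb.trans hxy⟩)

/-- Component count lower bound: #components + #edges ≥ #vertices. -/
theorem card_quot_add_card_le [Fintype V] [DecidableEq E] (F : Finset E) :
    Fintype.card V ≤ Nat.card (Quot (G.Reach F)) + F.card := by
  classical
  induction F using Finset.induction_on with
  | empty =>
    have hinj : Function.Injective (Quot.mk (G.Reach (∅ : Finset E))) := by
      intro a b hab
      exact G.reach_empty (G.quot_reach_eq.mp hab)
    simpa using Nat.card_le_card_of_injective _ hinj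
  | @insert e F he ih =>
    set r := G.Reach F with hr
    set r' := G.Reach (insert e F) with hr'
    have hmono : ∀ {a b : V}, r a b → r' a b := fun h =>
      G.reach_mono (Finset.subset_insert e F) h
    haveI hFin : Fintype (Quot r') := Fintype.ofSurjective _ Quot.exists_rep
    set t := G.tgt e with ht
    set s := G.src e with hs
    set g : V → Option (Quot r') := fun a =>
      if r a t then none else some (Quot.mk r' a) with hg
    have hresp : ∀ a b : V, r a b → g a = g b := by
      intro a b hab
      by_cases hat : r a t
      · have hbt : r b t := (G.reach_symm hab).trans hat
        simp [hg, hat, hbt]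
      · have hbt : ¬ r b t := fun hbt => hat (hab.trans hbt)
        simp only [hg, if_neg hat, if_neg hbt, Option.some.injEq]
        exact Quot.sound (hmono hab)
    set f : Quot r → Option (Quot r') := Quot.lift g hresp with hf
    have hinj : Function.Injective f := by
      intro qa qb hab
      obtain ⟨a, rfl⟩ := Quot.exists_rep qa
      obtain ⟨b, rfl⟩ := Quot.exists_rep qb
      change g a = g b at hab
      by_cases hat : r a t <;> by_cases hbt : r b t <;>
        simp only [hg, if_pos, if_neg, hat, hbt, ite_true, ite_false, Option.some.injEq,
          reduceCtorEq] at hab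
      · exact (G.quot_reach_eq).mpr (hat.trans (G.reach_symm hbt))
      · rcases G.reach_insert ((G.quot_reach_eq).mp hab) with h | ⟨h1, h2⟩ | ⟨h1, h2⟩
        · exact (G.quot_reach_eq).mpr h
        · exact absurd (G.reach_symm h2) hbt
        · exact absurd h1 hat
    have : Finite (Option (Quot r')) := inferInstance
    have hle : Nat.card (Quot r) ≤ Nat.card (Quot r') + 1 := by
      calc Nat.card (Quot r) ≤ Nat.card (Option (Quot r')) :=
            Nat.card_le_card_of_injective f hinj
        _ = Nat.card (Quot r') + 1 := by simp [Nat.card_eq_fintype_card]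
    have hcard : (insert e F).card = F.card + 1 := Finset.card_insert_of_notMem he
    omega

end Multigraph

set_option linter.unusedSectionVars false
namespace Multigraph

variable {E V : Type*} (G : Multigraph E V) [Fintype V]

/-- Totality of reachability from three mutually-connected hubs covering everything. -/
theorem reach_total_of_hubs {F : Finset E} {a b c : V}
    (hab : G.Reach F a b) (hac : G.Reach F a c)
    (hfull : ∀ x : V, G.Reach F x a ∨ G.Reach F x b ∨ G.Reach F x c) :
    ∀ x y : V, G.Reach F x y := by
  have key : ∀ x : V, G.Reach F x a := by
    intro x
    rcases hfull x with h | h | h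
    · exact h
    · exact h.trans (G.reach_symm hab)
    · exact h.trans (G.reach_symm hac)
  intro x y
  exact (key x).trans (G.reach_symm (key y))

theorem isSpanningTree_iff_atoms {F : Finset E} (a b c : V) :
    G.IsSpanningTree F ↔ F.card + 1 = Fintype.card V ∧
      G.Reach F a b ∧ G.Reach F a c ∧ G.Reach F b c ∧
      (∀ x : V, G.Reach F x a ∨ G.Reach F x b ∨ G.Reach F x c) := by
  constructor
  · rintro ⟨htot, hcard⟩
    exact ⟨hcard, htot a b, htot a c, htot b c, fun x => Or.inl (htot x a)⟩
  · rintro ⟨hcard, hab, hac, _, hfull⟩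
    exact ⟨G.reach_total_of_hubs hab hac hfull, hcard⟩

variable [DecidableEq V]

theorem isSpanningForest_single_iff {F : Finset E} {a b c : V} :
    G.IsSpanningForest {{a, b, c}} F ↔
      F.card + 1 = Fintype.card V ∧
      G.Reach F a b ∧ G.Reach F a c ∧ G.Reach F b c ∧
      (∀ x : V, G.Reach F x a ∨ G.Reach F x b ∨ G.Reach F x c) := by
  unfold IsSpanningForest
  rw [Finset.card_singleton]
  constructor
  · rintro ⟨hcard, hconn, -, hfull⟩
    have hmem : ({a,b,c} : Finset V) ∈ ({({a,b,c} : Finset V)} : Finset (Finset V)) := by simp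
    refine ⟨hcard, hconn _ hmem a (by simp) b (by simp), hconn _ hmem a (by simp) c (by simp),
      hconn _ hmem b (by simp) c (by simp), ?_⟩
    intro x
    obtain ⟨p, hp, y, hy, hxy⟩ := hfull x
    simp only [Finset.mem_singleton] at hp
    subst hp
    simp only [Finset.mem_insert, Finset.mem_singleton] at hy
    rcases hy with rfl | rfl | rfl
    · exact Or.inl hxy
    · exact Or.inr (Or.inl hxy)
    · exact Or.inr (Or.inr hxy)
  · rintro ⟨hcard, hab', hac', hbc', hfull⟩
    have htot := G.reach_total_of_hubs hab' hac' hfull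
    refine ⟨hcard, fun p _ x _ y _ => htot x y, ?_, ?_⟩
    · intro p hp q hq hpq
      simp only [Finset.mem_singleton] at hp hq
      exact absurd (hp.trans hq.symm) hpq
    · intro x
      refine ⟨{a,b,c}, by simp, ?_⟩
      rcases hfull x with h | h | h
      · exact ⟨a, by simp, h⟩
      · exact ⟨b, by simp, h⟩
      · exact ⟨c, by simp, h⟩

theorem isSpanningForest_pair_iff {F : Finset E} {a b c : V} (hab : a ≠ b) (hac : a ≠ c) :
    G.IsSpanningForest {{a}, {b, c}} F ↔
      F.card + 2 = Fintype.card V ∧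
      G.Reach F b c ∧ ¬ G.Reach F a b ∧ ¬ G.Reach F a c ∧
      (∀ x : V, G.Reach F x a ∨ G.Reach F x b ∨ G.Reach F x c) := by
  have hne : ({a} : Finset V) ≠ {b, c} := by
    intro h
    have : a ∈ ({b, c} : Finset V) := h ▸ Finset.mem_singleton_self a
    simp only [Finset.mem_insert, Finset.mem_singleton] at this
    tauto
  have hpc : ({({a} : Finset V), {b, c}} : Finset (Finset V)).card = 2 := by
    rw [Finset.card_insert_of_notMem (by simpa using hne), Finset.card_singleton]
  unfold IsSpanningForest
  rw [hpc]
  have hma : ({a} : Finset V) ∈ ({({a} : Finset V), {b, c}} : Finset (Finset V)) := by simp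
  have hmbc : ({b, c} : Finset V) ∈ ({({a} : Finset V), {b, c}} : Finset (Finset V)) := by simp
  constructor
  · rintro ⟨hcard, hconn, hdis, hfull⟩
    refine ⟨hcard, hconn _ hmbc b (by simp) c (by simp),
      hdis _ hma _ hmbc hne a (by simp) b (by simp),
      hdis _ hma _ hmbc hne a (by simp) c (by simp), ?_⟩
    intro x
    obtain ⟨p, hp, y, hy, hxy⟩ := hfull x
    simp only [Finset.mem_insert, Finset.mem_singleton] at hp
    rcases hp with rfl | rfl
    · simp only [Finset.mem_singleton] at hy; subst hy; exact Or.inl hxy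
    · simp only [Finset.mem_insert, Finset.mem_singleton] at hy
      rcases hy with rfl | rfl
      · exact Or.inr (Or.inl hxy)
      · exact Or.inr (Or.inr hxy)
  · rintro ⟨hcard, hbc', hnab, hnac, hfull⟩
    refine ⟨hcard, ?_, ?_, ?_⟩
    · intro p hp x hx y hy
      simp only [Finset.mem_insert, Finset.mem_singleton] at hp
      rcases hp with rfl | rfl
      · simp only [Finset.mem_singleton] at hx hy; subst hx; subst hy; exact G.reach_refl _
      · simp only [Finset.mem_insert, Finset.mem_singleton] at hx hy
        rcases hx with rfl | rfl <;> rcases hy with rfl | rfl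
        · exact G.reach_refl _
        · exact hbc'
        · exact G.reach_symm hbc'
        · exact G.reach_refl _
    · intro p hp q hq hpq x hx y hy
      simp only [Finset.mem_insert, Finset.mem_singleton] at hp hq
      rcases hp with rfl | rfl <;> rcases hq with rfl | rfl
      · exact absurd rfl hpq
      · simp only [Finset.mem_singleton] at hx
        simp only [Finset.mem_insert, Finset.mem_singleton] at hy
        subst hx
        rcases hy with rfl | rfl
        · exact hnab
        · exact hnac
      · simp only [Finset.mem_singleton] at hy
        simp only [Finset.mem_insert, Finset.mem_singleton] at hx
        subst hy
        rcases hx with rfl | rfl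
        · exact fun h => hnab (G.reach_symm h)
        · exact fun h => hnac (G.reach_symm h)
      · exact absurd rfl hpq
    · intro x
      rcases hfull x with h | h | h
      · exact ⟨{a}, hma, a, by simp, h⟩
      · exact ⟨{b, c}, hmbc, b, by simp, h⟩
      · exact ⟨{b, c}, hmbc, c, by simp, h⟩

theorem isSpanningForest_triple_iff {F : Finset E} {a b c : V} (hab : a ≠ b) (hac : a ≠ c)
    (hbc : b ≠ c) :
    G.IsSpanningForest {{a}, {b}, {c}} F ↔
      F.card + 3 = Fintype.card V ∧
      ¬ G.Reach F a b ∧ ¬ G.Reach F a c ∧ ¬ G.Reach F b c ∧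
      (∀ x : V, G.Reach F x a ∨ G.Reach F x b ∨ G.Reach F x c) := by
  have hpc : ({({a} : Finset V), {b}, {c}} : Finset (Finset V)).card = 3 := by
    rw [Finset.card_insert_of_notMem (by simp [Finset.singleton_injective.ne hab,
          Finset.singleton_injective.ne hac]),
      Finset.card_insert_of_notMem (by simp [Finset.singleton_injective.ne hbc]),
      Finset.card_singleton]
  unfold IsSpanningForest
  rw [hpc]
  have hma : ({a} : Finset V) ∈ ({({a} : Finset V), {b}, {c}} : Finset (Finset V)) := by simp
  have hmb : ({b} : Finset V) ∈ ({({a} : Finset V), {b}, {c}} : Finset (Finset V)) := by simp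
  have hmc : ({c} : Finset V) ∈ ({({a} : Finset V), {b}, {c}} : Finset (Finset V)) := by simp
  constructor
  · rintro ⟨hcard, hconn, hdis, hfull⟩
    refine ⟨hcard,
      hdis _ hma _ hmb (Finset.singleton_injective.ne hab) a (by simp) b (by simp),
      hdis _ hma _ hmc (Finset.singleton_injective.ne hac) a (by simp) c (by simp),
      hdis _ hmb _ hmc (Finset.singleton_injective.ne hbc) b (by simp) c (by simp), ?_⟩
    intro x
    obtain ⟨p, hp, y, hy, hxy⟩ := hfull x
    simp only [Finset.mem_insert, Finset.mem_singleton] at hp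
    rcases hp with rfl | rfl | rfl <;> simp only [Finset.mem_singleton] at hy <;> subst hy
    · exact Or.inl hxy
    · exact Or.inr (Or.inl hxy)
    · exact Or.inr (Or.inr hxy)
  · rintro ⟨hcard, hnab, hnac, hnbc, hfull⟩
    refine ⟨hcard, ?_, ?_, ?_⟩
    · intro p hp x hx y hy
      simp only [Finset.mem_insert, Finset.mem_singleton] at hp
      rcases hp with rfl | rfl | rfl <;>
        simp only [Finset.mem_singleton] at hx hy <;> subst hx <;> subst hy <;>
        exact G.reach_refl _
    · intro p hp q hq hpq x hx y hy
      simp only [Finset.mem_insert, Finset.mem_singleton] at hp hq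
      rcases hp with rfl | rfl | rfl <;> rcases hq with rfl | rfl | rfl <;>
        first
          | exact absurd rfl hpq
          | (simp only [Finset.mem_singleton] at hx hy; subst hx; subst hy)
      · exact hnab
      · exact hnac
      · exact fun h => hnab (G.reach_symm h)
      · exact hnbc
      · exact fun h => hnac (G.reach_symm h)
      · exact fun h => hnbc (G.reach_symm h)
    · intro x
      rcases hfull x with h | h | h
      · exact ⟨{a}, hma, a, by simp, h⟩
      · exact ⟨{b}, hmb, b, by simp, h⟩
      · exact ⟨{c}, hmc, c, by simp, h⟩

end Multigraph

section Glue

variable {E1 E2 : Type*} [DecidableEq E1] [DecidableEq E2]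

/-- Glue two edge subsets into a subset of the disjoint sum. -/
def glue (F1 : Finset E1) (F2 : Finset E2) : Finset (E1 ⊕ E2) :=
  F1.map ⟨Sum.inl, Sum.inl_injective⟩ ∪ F2.map ⟨Sum.inr, Sum.inr_injective⟩

@[simp] theorem mem_glue_inl {F1 : Finset E1} {F2 : Finset E2} {e : E1} :
    Sum.inl e ∈ glue F1 F2 ↔ e ∈ F1 := by
  simp [glue]

@[simp] theorem mem_glue_inr {F1 : Finset E1} {F2 : Finset E2} {e : E2} :
    Sum.inr e ∈ glue F1 F2 ↔ e ∈ F2 := by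
  simp [glue]

theorem glue_compl [Fintype E1] [Fintype E2] (F1 : Finset E1) (F2 : Finset E2) :
    (glue F1 F2)ᶜ = glue F1ᶜ F2ᶜ := by
  ext e
  cases e <;> simp

theorem card_glue (F1 : Finset E1) (F2 : Finset E2) :
    (glue F1 F2).card = F1.card + F2.card := by
  rw [glue, Finset.card_union_of_disjoint, Finset.card_map, Finset.card_map]
  simp [Finset.disjoint_left]

/-- The equivalence between pairs of edge subsets and subsets of the sum. -/
noncomputable def glueEquiv : Finset E1 × Finset E2 ≃ Finset (E1 ⊕ E2) where
  toFun p := glue p.1 p.2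
  invFun T := (T.preimage Sum.inl Sum.inl_injective.injOn,
               T.preimage Sum.inr Sum.inr_injective.injOn)
  left_inv p := by
    ext e <;> simp [Finset.mem_preimage]
  right_inv T := by
    ext e
    cases e <;> simp [Finset.mem_preimage]

theorem sum_finset_sum_glue [Fintype E1] [Fintype E2] {M : Type*} [AddCommMonoid M] (f : Finset (E1 ⊕ E2) → M) :
    ∑ T : Finset (E1 ⊕ E2), f T = ∑ F1 : Finset E1, ∑ F2 : Finset E2, f (glue F1 F2) := by
  classical
  rw [← Equiv.sum_comp (glueEquiv (E1 := E1) (E2 := E2)) f, Fintype.sum_prod_type]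
  rfl

open MvPolynomial in
theorem rename_prod_glue [Fintype E1] [Fintype E2] (F1 : Finset E1) (F2 : Finset E2) :
    (rename (Sum.inl : E1 → E1 ⊕ E2) (∏ e ∈ F1ᶜ, (X e : MvPolynomial E1 ℚ))) *
      (rename (Sum.inr : E2 → E1 ⊕ E2) (∏ e ∈ F2ᶜ, (X e : MvPolynomial E2 ℚ))) =
      ∏ e ∈ (glue F1 F2)ᶜ, (X e : MvPolynomial (E1 ⊕ E2) ℚ) := by
  rw [glue_compl, glue, Finset.prod_union (by simp [Finset.disjoint_left]),
    Finset.prod_map, Finset.prod_map, map_prod, map_prod]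
  simp [rename_X]

open MvPolynomial Classical in
theorem pair_polys' [Fintype E1] [Fintype E2]
    (p1 : Finset E1 → Prop) (p2 : Finset E2 → Prop) :
    (∑ F1 : Finset E1, if p1 F1 then
        rename (Sum.inl : E1 → E1 ⊕ E2) (∏ e ∈ F1ᶜ, (X e : MvPolynomial E1 ℚ)) else 0) *
      (∑ F2 : Finset E2, if p2 F2 then
        rename (Sum.inr : E2 → E1 ⊕ E2) (∏ e ∈ F2ᶜ, (X e : MvPolynomial E2 ℚ)) else 0) =
      ∑ F1 : Finset E1, ∑ F2 : Finset E2,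
        if p1 F1 ∧ p2 F2
        then ∏ e ∈ (glue F1 F2)ᶜ, (X e : MvPolynomial (E1 ⊕ E2) ℚ) else 0 := by
  classical
  rw [Finset.sum_mul_sum]
  refine Finset.sum_congr rfl fun F1 _ => Finset.sum_congr rfl fun F2 _ => ?_
  rw [ite_mul, zero_mul, mul_ite, mul_zero]
  by_cases h1 : p1 F1 <;> by_cases h2 : p2 F2 <;>
    simp only [h1, h2, if_true, if_false, and_true, and_false, true_and, false_and,
      ite_true, ite_false]
  exact rename_prod_glue F1 F2

open MvPolynomial Classical in
theorem rename_sum_ite {τ : Type*} [Fintype E1]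
    (f : E1 → τ) (p : Finset E1 → Prop) :
    rename (R := ℚ) f (∑ F : Finset E1, if p F then ∏ e ∈ Fᶜ, (X e : MvPolynomial E1 ℚ) else 0) =
      ∑ F : Finset E1, if p F then
        rename f (∏ e ∈ Fᶜ, (X e : MvPolynomial E1 ℚ)) else 0 := by
  rw [map_sum]
  exact Finset.sum_congr rfl fun F _ => by rw [apply_ite (rename f), map_zero]

end Glue

section Cut

open Multigraph

variable {E1 E2 V1 V2 : Type*} (G1 : Multigraph E1 V1) (G2 : Multigraph E2 V2)
  (F1 : Finset E1) (F2 : Finset E2) (c1 : Fin 3 → V1) (c2 : Fin 3 → V2)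

/-- One-step relation between cut vertices: connected inside `G1` or inside `G2`. -/
def cutRel : Fin 3 → Fin 3 → Prop := fun i j =>
  G1.Reach F1 (c1 i) (c1 j) ∨ G2.Reach F2 (c2 i) (c2 j)

/-- Joint connectivity of cut vertices. -/
def cutReach : Fin 3 → Fin 3 → Prop :=
  Relation.ReflTransGen (cutRel G1 G2 F1 F2 c1 c2)

variable {G1 G2 F1 F2 c1 c2}

theorem cutRel_refl (i : Fin 3) : cutRel G1 G2 F1 F2 c1 c2 i i :=
  Or.inl (G1.reach_refl _)

theorem cutRel_symm {i j : Fin 3} (h : cutRel G1 G2 F1 F2 c1 c2 i j) :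
    cutRel G1 G2 F1 F2 c1 c2 j i :=
  h.imp G1.reach_symm G2.reach_symm

theorem cutRel.cutReach {i j : Fin 3} (h : cutRel G1 G2 F1 F2 c1 c2 i j) :
    cutReach G1 G2 F1 F2 c1 c2 i j :=
  Relation.ReflTransGen.single h

/-- Transitive-closure compression on a three-element set: any chain can be replaced by a
chain of length at most two. -/
theorem cutReach_compress {i j : Fin 3} (h : cutReach G1 G2 F1 F2 c1 c2 i j) :
    cutRel G1 G2 F1 F2 c1 c2 i j ∨
      ∃ k, cutRel G1 G2 F1 F2 c1 c2 i k ∧ cutRel G1 G2 F1 F2 c1 c2 k j := by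
  induction h using Relation.ReflTransGen.head_induction_on with
  | refl => exact Or.inl (cutRel_refl j)
  | @head a c hac hcb ih =>
    rcases ih with hcj | ⟨k, hck, hkj⟩
    · exact Or.inr ⟨c, hac, hcj⟩
    · -- chain a → c → k → j : four indices in `Fin 3`, so two coincide
      by_cases h1 : a = c
      · subst h1; exact Or.inr ⟨k, hck, hkj⟩
      by_cases h2 : a = k
      · subst h2; exact Or.inl hkj
      by_cases h3 : a = j
      · subst h3; exact Or.inl (cutRel_refl a)
      by_cases h4 : c = k
      · subst h4; exact Or.inr ⟨c, hac, hkj⟩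
      by_cases h5 : c = j
      · subst h5; exact Or.inl hac
      by_cases h6 : k = j
      · subst h6; exact Or.inr ⟨c, hac, hck⟩
      exfalso
      have e1 : a.val ≠ c.val := fun h => h1 (Fin.ext h)
      have e2 : a.val ≠ k.val := fun h => h2 (Fin.ext h)
      have e3 : a.val ≠ j.val := fun h => h3 (Fin.ext h)
      have e4 : c.val ≠ k.val := fun h => h4 (Fin.ext h)
      have e5 : c.val ≠ j.val := fun h => h5 (Fin.ext h)
      have e6 : k.val ≠ j.val := fun h => h6 (Fin.ext h)
      have := a.isLt; have := c.isLt; have := k.isLt; have := j.isLt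
      omega

end Cut

section Main

open Multigraph

variable {E1 E2 V : Type*} [DecidableEq E1] [DecidableEq E2]
  {S1 S2 : Finset V}
  {G1 : Multigraph E1 ↥S1} {G2 : Multigraph E2 ↥S2} {G : Multigraph (E1 ⊕ E2) V}
  {F1 : Finset E1} {F2 : Finset E2}
  {c1 : Fin 3 → ↥S1} {c2 : Fin 3 → ↥S2}

theorem adj_glue_iff (hsrc1 : ∀ e, G.src (Sum.inl e) = ↑(G1.src e))
    (htgt1 : ∀ e, G.tgt (Sum.inl e) = ↑(G1.tgt e))
    (hsrc2 : ∀ e, G.src (Sum.inr e) = ↑(G2.src e))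
    (htgt2 : ∀ e, G.tgt (Sum.inr e) = ↑(G2.tgt e)) {x y : V} :
    G.Adj (glue F1 F2) x y ↔
      (∃ (hx : x ∈ S1) (hy : y ∈ S1), G1.Adj F1 ⟨x, hx⟩ ⟨y, hy⟩) ∨
      (∃ (hx : x ∈ S2) (hy : y ∈ S2), G2.Adj F2 ⟨x, hx⟩ ⟨y, hy⟩) := by
  constructor
  · rintro ⟨e, he, hor⟩
    cases e with
    | inl e =>
      left
      rcases hor with ⟨h1, h2⟩ | ⟨h1, h2⟩
      · rw [hsrc1] at h1; rw [htgt1] at h2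
        subst h1; subst h2
        exact ⟨(G1.src e).2, (G1.tgt e).2, e, mem_glue_inl.mp he,
          Or.inl ⟨Subtype.ext rfl, Subtype.ext rfl⟩⟩
      · rw [hsrc1] at h1; rw [htgt1] at h2
        subst h1; subst h2
        exact ⟨(G1.tgt e).2, (G1.src e).2, e, mem_glue_inl.mp he,
          Or.inr ⟨Subtype.ext rfl, Subtype.ext rfl⟩⟩
    | inr e =>
      right
      rcases hor with ⟨h1, h2⟩ | ⟨h1, h2⟩
      · rw [hsrc2] at h1; rw [htgt2] at h2
        subst h1; subst h2
        exact ⟨(G2.src e).2, (G2.tgt e).2, e, mem_glue_inr.mp he,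
          Or.inl ⟨Subtype.ext rfl, Subtype.ext rfl⟩⟩
      · rw [hsrc2] at h1; rw [htgt2] at h2
        subst h1; subst h2
        exact ⟨(G2.tgt e).2, (G2.src e).2, e, mem_glue_inr.mp he,
          Or.inr ⟨Subtype.ext rfl, Subtype.ext rfl⟩⟩
  · rintro (⟨hx, hy, e, he, hor⟩ | ⟨hx, hy, e, he, hor⟩)
    · refine ⟨Sum.inl e, mem_glue_inl.mpr he, ?_⟩
      rcases hor with ⟨h1, h2⟩ | ⟨h1, h2⟩
      · exact Or.inl ⟨by rw [hsrc1, h1], by rw [htgt1, h2]⟩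
      · exact Or.inr ⟨by rw [hsrc1, h1], by rw [htgt1, h2]⟩
    · refine ⟨Sum.inr e, mem_glue_inr.mpr he, ?_⟩
      rcases hor with ⟨h1, h2⟩ | ⟨h1, h2⟩
      · exact Or.inl ⟨by rw [hsrc2, h1], by rw [htgt2, h2]⟩
      · exact Or.inr ⟨by rw [hsrc2, h1], by rw [htgt2, h2]⟩

theorem lift1 (hsrc1 : ∀ e, G.src (Sum.inl e) = ↑(G1.src e))
    (htgt1 : ∀ e, G.tgt (Sum.inl e) = ↑(G1.tgt e))
    (hsrc2 : ∀ e, G.src (Sum.inr e) = ↑(G2.src e))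
    (htgt2 : ∀ e, G.tgt (Sum.inr e) = ↑(G2.tgt e)) {a b : ↥S1}
    (h : G1.Reach F1 a b) : G.Reach (glue F1 F2) ↑a ↑b := by
  induction h with
  | refl => exact G.reach_refl _
  | @tail p q hp hstep ih =>
    refine ih.tail ((adj_glue_iff hsrc1 htgt1 hsrc2 htgt2).mpr (Or.inl ⟨p.2, q.2, ?_⟩))
    simpa using hstep

theorem lift2 (hsrc1 : ∀ e, G.src (Sum.inl e) = ↑(G1.src e))
    (htgt1 : ∀ e, G.tgt (Sum.inl e) = ↑(G1.tgt e))
    (hsrc2 : ∀ e, G.src (Sum.inr e) = ↑(G2.src e))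
    (htgt2 : ∀ e, G.tgt (Sum.inr e) = ↑(G2.tgt e)) {a b : ↥S2}
    (h : G2.Reach F2 a b) : G.Reach (glue F1 F2) ↑a ↑b := by
  induction h with
  | refl => exact G.reach_refl _
  | @tail p q hp hstep ih =>
    refine ih.tail ((adj_glue_iff hsrc1 htgt1 hsrc2 htgt2).mpr (Or.inr ⟨p.2, q.2, ?_⟩))
    simpa using hstep

theorem liftCut (hsrc1 : ∀ e, G.src (Sum.inl e) = ↑(G1.src e))
    (htgt1 : ∀ e, G.tgt (Sum.inl e) = ↑(G1.tgt e))
    (hsrc2 : ∀ e, G.src (Sum.inr e) = ↑(G2.src e))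
    (htgt2 : ∀ e, G.tgt (Sum.inr e) = ↑(G2.tgt e))
    (hc : ∀ i, ((c1 i : V)) = (c2 i : V)) {i j : Fin 3}
    (h : cutReach G1 G2 F1 F2 c1 c2 i j) :
    G.Reach (glue F1 F2) ↑(c1 i) ↑(c1 j) := by
  induction h with
  | refl => exact G.reach_refl _
  | @tail p q hp hstep ih =>
    refine ih.trans ?_
    rcases hstep with h1 | h2
    · exact lift1 hsrc1 htgt1 hsrc2 htgt2 h1
    · rw [hc p, hc q]; exact lift2 hsrc1 htgt1 hsrc2 htgt2 h2

theorem reach_glue_decomp (hsrc1 : ∀ e, G.src (Sum.inl e) = ↑(G1.src e))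
    (htgt1 : ∀ e, G.tgt (Sum.inl e) = ↑(G1.tgt e))
    (hsrc2 : ∀ e, G.src (Sum.inr e) = ↑(G2.src e))
    (htgt2 : ∀ e, G.tgt (Sum.inr e) = ↑(G2.tgt e))
    (hc : ∀ i, ((c1 i : V)) = (c2 i : V))
    (hK : ∀ x : V, x ∈ S1 → x ∈ S2 → ∃ i, x = ↑(c1 i))
    {x y : V} (h : G.Reach (glue F1 F2) x y) :
    (∀ (hx : x ∈ S1) (hy : y ∈ S1),
       G1.Reach F1 ⟨x, hx⟩ ⟨y, hy⟩ ∨ ∃ i j, G1.Reach F1 ⟨x, hx⟩ (c1 i) ∧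
         cutReach G1 G2 F1 F2 c1 c2 i j ∧ G1.Reach F1 (c1 j) ⟨y, hy⟩) ∧
    (∀ (hx : x ∈ S1) (hy : y ∈ S2), ∃ i j, G1.Reach F1 ⟨x, hx⟩ (c1 i) ∧
         cutReach G1 G2 F1 F2 c1 c2 i j ∧ G2.Reach F2 (c2 j) ⟨y, hy⟩) ∧
    (∀ (hx : x ∈ S2) (hy : y ∈ S1), ∃ i j, G2.Reach F2 ⟨x, hx⟩ (c2 i) ∧
         cutReach G1 G2 F1 F2 c1 c2 i j ∧ G1.Reach F1 (c1 j) ⟨y, hy⟩) ∧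
    (∀ (hx : x ∈ S2) (hy : y ∈ S2),
       G2.Reach F2 ⟨x, hx⟩ ⟨y, hy⟩ ∨ ∃ i j, G2.Reach F2 ⟨x, hx⟩ (c2 i) ∧
         cutReach G1 G2 F1 F2 c1 c2 i j ∧ G2.Reach F2 (c2 j) ⟨y, hy⟩) := by
  induction h using Relation.ReflTransGen.head_induction_on with
  | refl =>
    refine ⟨fun hx hy => Or.inl (G1.reach_refl _), fun hx hy => ?_, fun hx hy => ?_,
      fun hx hy => Or.inl (G2.reach_refl _)⟩
    · obtain ⟨i0, hx0⟩ := hK y hx hy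
      have e1 : (⟨y, hx⟩ : ↥S1) = c1 i0 := Subtype.ext hx0
      have e2 : (⟨y, hy⟩ : ↥S2) = c2 i0 := Subtype.ext (hx0.trans (hc i0))
      exact ⟨i0, i0, e1 ▸ G1.reach_refl _, Relation.ReflTransGen.refl,
        e2 ▸ G2.reach_refl _⟩
    · obtain ⟨i0, hx0⟩ := hK y hy hx
      have e1 : (⟨y, hy⟩ : ↥S1) = c1 i0 := Subtype.ext hx0
      have e2 : (⟨y, hx⟩ : ↥S2) = c2 i0 := Subtype.ext (hx0.trans (hc i0))
      exact ⟨i0, i0, e2 ▸ G2.reach_refl _, Relation.ReflTransGen.refl,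
        e1 ▸ G1.reach_refl _⟩
  | @head x z hxz hzy ih =>
    obtain ⟨ih11, ih12, ih21, ih22⟩ := ih
    rcases (adj_glue_iff hsrc1 htgt1 hsrc2 htgt2).mp hxz with ⟨hx1, hz1, a1⟩ | ⟨hx2, hz2, a2⟩
    · -- first step inside G1
      have ρ : G1.Reach F1 ⟨x, hx1⟩ ⟨z, hz1⟩ := G1.adj_reach a1
      have d11 : ∀ (hy : y ∈ S1),
          G1.Reach F1 ⟨x, hx1⟩ ⟨y, hy⟩ ∨ ∃ i j, G1.Reach F1 ⟨x, hx1⟩ (c1 i) ∧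
            cutReach G1 G2 F1 F2 c1 c2 i j ∧ G1.Reach F1 (c1 j) ⟨y, hy⟩ := by
        intro hy
        rcases ih11 hz1 hy with h | ⟨i, j, h1, h2, h3⟩
        · exact Or.inl (ρ.trans h)
        · exact Or.inr ⟨i, j, ρ.trans h1, h2, h3⟩
      have d12 : ∀ (hy : y ∈ S2), ∃ i j, G1.Reach F1 ⟨x, hx1⟩ (c1 i) ∧
          cutReach G1 G2 F1 F2 c1 c2 i j ∧ G2.Reach F2 (c2 j) ⟨y, hy⟩ := by
        intro hy
        obtain ⟨i, j, h1, h2, h3⟩ := ih12 hz1 hy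
        exact ⟨i, j, ρ.trans h1, h2, h3⟩
      refine ⟨fun _ hy => d11 hy, fun _ hy => d12 hy, fun hx2 hy => ?_, fun hx2 hy => ?_⟩
      · -- x is a cut vertex
        obtain ⟨i0, hx0⟩ := hK x hx1 hx2
        have e1 : (⟨x, hx1⟩ : ↥S1) = c1 i0 := Subtype.ext hx0
        have e2 : (⟨x, hx2⟩ : ↥S2) = c2 i0 := Subtype.ext (hx0.trans (hc i0))
        rcases d11 hy with h | ⟨i, j, h1, h2, h3⟩
        · exact ⟨i0, i0, e2 ▸ G2.reach_refl _, Relation.ReflTransGen.refl, e1 ▸ h⟩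
        · exact ⟨i0, j, e2 ▸ G2.reach_refl _,
            Relation.ReflTransGen.head (Or.inl (e1 ▸ h1)) h2, h3⟩
      · obtain ⟨i0, hx0⟩ := hK x hx1 hx2
        have e1 : (⟨x, hx1⟩ : ↥S1) = c1 i0 := Subtype.ext hx0
        have e2 : (⟨x, hx2⟩ : ↥S2) = c2 i0 := Subtype.ext (hx0.trans (hc i0))
        obtain ⟨i, j, h1, h2, h3⟩ := d12 hy
        exact Or.inr ⟨i0, j, e2 ▸ G2.reach_refl _,
          Relation.ReflTransGen.head (Or.inl (e1 ▸ h1)) h2, h3⟩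
    · -- first step inside G2
      have ρ : G2.Reach F2 ⟨x, hx2⟩ ⟨z, hz2⟩ := G2.adj_reach a2
      have d22 : ∀ (hy : y ∈ S2),
          G2.Reach F2 ⟨x, hx2⟩ ⟨y, hy⟩ ∨ ∃ i j, G2.Reach F2 ⟨x, hx2⟩ (c2 i) ∧
            cutReach G1 G2 F1 F2 c1 c2 i j ∧ G2.Reach F2 (c2 j) ⟨y, hy⟩ := by
        intro hy
        rcases ih22 hz2 hy with h | ⟨i, j, h1, h2, h3⟩
        · exact Or.inl (ρ.trans h)
        · exact Or.inr ⟨i, j, ρ.trans h1, h2, h3⟩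
      have d21 : ∀ (hy : y ∈ S1), ∃ i j, G2.Reach F2 ⟨x, hx2⟩ (c2 i) ∧
          cutReach G1 G2 F1 F2 c1 c2 i j ∧ G1.Reach F1 (c1 j) ⟨y, hy⟩ := by
        intro hy
        obtain ⟨i, j, h1, h2, h3⟩ := ih21 hz2 hy
        exact ⟨i, j, ρ.trans h1, h2, h3⟩
      refine ⟨fun hx1 hy => ?_, fun hx1 hy => ?_, fun _ hy => d21 hy, fun _ hy => d22 hy⟩
      · obtain ⟨i0, hx0⟩ := hK x hx1 hx2
        have e1 : (⟨x, hx1⟩ : ↥S1) = c1 i0 := Subtype.ext hx0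
        have e2 : (⟨x, hx2⟩ : ↥S2) = c2 i0 := Subtype.ext (hx0.trans (hc i0))
        obtain ⟨i, j, h1, h2, h3⟩ := d21 hy
        exact Or.inr ⟨i0, j, e1 ▸ G1.reach_refl _,
          Relation.ReflTransGen.head (Or.inr (e2 ▸ h1)) h2, h3⟩
      · obtain ⟨i0, hx0⟩ := hK x hx1 hx2
        have e1 : (⟨x, hx1⟩ : ↥S1) = c1 i0 := Subtype.ext hx0
        have e2 : (⟨x, hx2⟩ : ↥S2) = c2 i0 := Subtype.ext (hx0.trans (hc i0))
        rcases d22 hy with h | ⟨i, j, h1, h2, h3⟩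
        · exact ⟨i0, i0, e1 ▸ G1.reach_refl _, Relation.ReflTransGen.refl, e2 ▸ h⟩
        · exact ⟨i0, j, e1 ▸ G1.reach_refl _,
            Relation.ReflTransGen.head (Or.inr (e2 ▸ h1)) h2, h3⟩

end Main

namespace Multigraph

theorem card_triple_le_two {α : Type*} [DecidableEq α] {a b c : α}
    (h : a = b ∨ a = c ∨ b = c) : ({a, b, c} : Finset α).card ≤ 2 := by
  have pairle : ∀ (x y : α), ({x, y} : Finset α).card ≤ 2 := fun x y =>
    le_trans (Finset.card_insert_le _ _) (by simp)
  rcases h with rfl | rfl | rfl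
  · exact le_trans (Finset.card_le_card (fun x hx => by simp at hx ⊢; tauto)
      : _ ≤ ({a, c} : Finset α).card) (pairle _ _)
  · exact le_trans (Finset.card_le_card (fun x hx => by simp at hx ⊢; tauto)
      : _ ≤ ({a, b} : Finset α).card) (pairle _ _)
  · exact le_trans (Finset.card_le_card (fun x hx => by simp at hx ⊢; tauto)
      : _ ≤ ({a, b} : Finset α).card) (pairle _ _)

variable {E W : Type*} (H : Multigraph E W) [Fintype W] [DecidableEq E]

open Classical in
theorem card_le_full_classes (F : Finset E) (c : Fin 3 → W)
    (hfull : ∀ x : W, ∃ i, H.Reach F x (c i)) :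
    Fintype.card W ≤ F.card +
      ({Quot.mk (H.Reach F) (c 0), Quot.mk (H.Reach F) (c 1), Quot.mk (H.Reach F) (c 2)} :
        Finset (Quot (H.Reach F))).card := by
  classical
  haveI : Fintype (Quot (H.Reach F)) := Fintype.ofSurjective _ Quot.exists_rep
  have h1 := H.card_quot_add_card_le F
  have h2 : Nat.card (Quot (H.Reach F)) ≤
      ({Quot.mk (H.Reach F) (c 0), Quot.mk (H.Reach F) (c 1), Quot.mk (H.Reach F) (c 2)} :
        Finset (Quot (H.Reach F))).card := by
    rw [Nat.card_eq_fintype_card, ← Finset.card_univ]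
    refine Finset.card_le_card fun q _ => ?_
    obtain ⟨x, rfl⟩ := Quot.exists_rep q
    obtain ⟨i, hi⟩ := hfull x
    have : Quot.mk (H.Reach F) x = Quot.mk (H.Reach F) (c i) := Quot.sound hi
    rw [this]
    fin_cases i <;> simp
  omega

theorem card_le_full3 (F : Finset E) (c : Fin 3 → W)
    (hfull : ∀ x : W, ∃ i, H.Reach F x (c i)) :
    Fintype.card W ≤ F.card + 3 := by
  classical
  refine le_trans (H.card_le_full_classes F c hfull) ?_
  have : ∀ (q1 q2 q3 : Quot (H.Reach F)), ({q1, q2, q3} : Finset _).card ≤ 3 := by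
    intro q1 q2 q3
    refine le_trans (Finset.card_insert_le _ _) ?_
    refine Nat.succ_le_succ (le_trans (Finset.card_insert_le _ _) ?_)
    simp
  exact Nat.add_le_add_left (this _ _ _) _

theorem card_le_full2 (F : Finset E) (c : Fin 3 → W)
    (hfull : ∀ x : W, ∃ i, H.Reach F x (c i))
    (h : H.Reach F (c 0) (c 1) ∨ H.Reach F (c 0) (c 2) ∨ H.Reach F (c 1) (c 2)) :
    Fintype.card W ≤ F.card + 2 := by
  classical
  refine le_trans (H.card_le_full_classes F c hfull) ?_
  refine Nat.add_le_add_left (card_triple_le_two ?_) _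
  rcases h with h | h | h
  · exact Or.inl (Quot.sound h)
  · exact Or.inr (Or.inl (Quot.sound h))
  · exact Or.inr (Or.inr (Quot.sound h))

theorem card_le_full1 (F : Finset E) (c : Fin 3 → W)
    (hfull : ∀ x : W, ∃ i, H.Reach F x (c i))
    (h1 : H.Reach F (c 0) (c 1)) (h2 : H.Reach F (c 0) (c 2)) :
    Fintype.card W ≤ F.card + 1 := by
  classical
  refine le_trans (H.card_le_full_classes F c hfull) ?_
  have e1 : Quot.mk (H.Reach F) (c 0) = Quot.mk (H.Reach F) (c 1) := Quot.sound h1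
  have e2 : Quot.mk (H.Reach F) (c 0) = Quot.mk (H.Reach F) (c 2) := Quot.sound h2
  refine Nat.add_le_add_left ?_ _
  refine le_trans (Finset.card_le_card (fun q hq => ?_)
    : _ ≤ ({Quot.mk (H.Reach F) (c 0)} : Finset _).card) (by simp)
  simp only [Finset.mem_insert, Finset.mem_singleton] at hq
  rcases hq with rfl | rfl | rfl
  · simp
  · simp [e1]
  · simp [e2]

end Multigraph

section MainIff

open Multigraph

set_option maxHeartbeats 2000000 in
open Classical in
theorem pointwise_ite {E1 E2 V : Type*} [Fintype E1] [DecidableEq E1]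
    [Fintype E2] [DecidableEq E2] [Fintype V] [DecidableEq V]
    (S1 S2 : Finset V) (u v w : V) (huv : u ≠ v) (huw : u ≠ w) (hvw : v ≠ w)
    (hcover : S1 ∪ S2 = Finset.univ) (hinter : S1 ∩ S2 = {u, v, w})
    (hu1 : u ∈ S1) (hu2 : u ∈ S2) (hv1 : v ∈ S1) (hv2 : v ∈ S2)
    (hw1 : w ∈ S1) (hw2 : w ∈ S2)
    (G1 : Multigraph E1 ↥S1) (G2 : Multigraph E2 ↥S2) (G : Multigraph (E1 ⊕ E2) V)
    (hsrc1 : ∀ e, G.src (Sum.inl e) = ↑(G1.src e))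
    (htgt1 : ∀ e, G.tgt (Sum.inl e) = ↑(G1.tgt e))
    (hsrc2 : ∀ e, G.src (Sum.inr e) = ↑(G2.src e))
    (htgt2 : ∀ e, G.tgt (Sum.inr e) = ↑(G2.tgt e))
    (F1 : Finset E1) (F2 : Finset E2) {M : Type*} [AddCommMonoid M] (m : M) :
    (if G.IsSpanningTree (glue F1 F2) then m else 0) =
      (if G1.IsSpanningForest {({⟨u, hu1⟩} : Finset ↥S1), {⟨v, hv1⟩}, {⟨w, hw1⟩}} F1 ∧
          G2.IsSpanningTree F2 then m else 0)
      + (if G1.IsSpanningForest {({⟨u, hu1⟩} : Finset ↥S1), {⟨v, hv1⟩, ⟨w, hw1⟩}} F1 ∧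
          G2.IsSpanningForest {({⟨v, hv2⟩} : Finset ↥S2), {⟨u, hu2⟩, ⟨w, hw2⟩}} F2 then m else 0)
      + (if G1.IsSpanningForest {({⟨u, hu1⟩} : Finset ↥S1), {⟨v, hv1⟩, ⟨w, hw1⟩}} F1 ∧
          G2.IsSpanningForest {({⟨w, hw2⟩} : Finset ↥S2), {⟨u, hu2⟩, ⟨v, hv2⟩}} F2 then m else 0)
      + (if G1.IsSpanningForest {({⟨v, hv1⟩} : Finset ↥S1), {⟨u, hu1⟩, ⟨w, hw1⟩}} F1 ∧
          G2.IsSpanningForest {({⟨u, hu2⟩} : Finset ↥S2), {⟨v, hv2⟩, ⟨w, hw2⟩}} F2 then m else 0)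
      + (if G1.IsSpanningForest {({⟨v, hv1⟩} : Finset ↥S1), {⟨u, hu1⟩, ⟨w, hw1⟩}} F1 ∧
          G2.IsSpanningForest {({⟨w, hw2⟩} : Finset ↥S2), {⟨u, hu2⟩, ⟨v, hv2⟩}} F2 then m else 0)
      + (if G1.IsSpanningForest {({⟨w, hw1⟩} : Finset ↥S1), {⟨u, hu1⟩, ⟨v, hv1⟩}} F1 ∧
          G2.IsSpanningForest {({⟨u, hu2⟩} : Finset ↥S2), {⟨v, hv2⟩, ⟨w, hw2⟩}} F2 then m else 0)
      + (if G1.IsSpanningForest {({⟨w, hw1⟩} : Finset ↥S1), {⟨u, hu1⟩, ⟨v, hv1⟩}} F1 ∧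
          G2.IsSpanningForest {({⟨v, hv2⟩} : Finset ↥S2), {⟨u, hu2⟩, ⟨w, hw2⟩}} F2 then m else 0)
      + (if G1.IsSpanningTree F1 ∧
          G2.IsSpanningForest {({⟨u, hu2⟩} : Finset ↥S2), {⟨v, hv2⟩}, {⟨w, hw2⟩}} F2
          then m else 0) := by
  classical
  set U1 : ↥S1 := ⟨u, hu1⟩ with hU1
  set V1 : ↥S1 := ⟨v, hv1⟩ with hV1
  set W1 : ↥S1 := ⟨w, hw1⟩ with hW1
  set U2 : ↥S2 := ⟨u, hu2⟩ with hU2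
  set V2 : ↥S2 := ⟨v, hv2⟩ with hV2
  set W2 : ↥S2 := ⟨w, hw2⟩ with hW2
  have hUV1 : U1 ≠ V1 := fun h => huv (congrArg Subtype.val h)
  have hUW1 : U1 ≠ W1 := fun h => huw (congrArg Subtype.val h)
  have hVW1 : V1 ≠ W1 := fun h => hvw (congrArg Subtype.val h)
  have hVU1 : V1 ≠ U1 := fun h => huv (congrArg Subtype.val h).symm
  have hWU1 : W1 ≠ U1 := fun h => huw (congrArg Subtype.val h).symm
  have hWV1 : W1 ≠ V1 := fun h => hvw (congrArg Subtype.val h).symm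
  have hUV2 : U2 ≠ V2 := fun h => huv (congrArg Subtype.val h)
  have hUW2 : U2 ≠ W2 := fun h => huw (congrArg Subtype.val h)
  have hVW2 : V2 ≠ W2 := fun h => hvw (congrArg Subtype.val h)
  have hVU2 : V2 ≠ U2 := fun h => huv (congrArg Subtype.val h).symm
  have hWU2 : W2 ≠ U2 := fun h => huw (congrArg Subtype.val h).symm
  have hWV2 : W2 ≠ V2 := fun h => hvw (congrArg Subtype.val h).symm
  -- abbreviations
  set n1 := F1.card with hn1
  set n2 := F2.card with hn2
  set s1 := Fintype.card ↥S1 with hs1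
  set s2 := Fintype.card ↥S2 with hs2
  -- atoms
  set A1 := G1.Reach F1 U1 V1 with hA1d
  set B1 := G1.Reach F1 U1 W1 with hB1d
  set C1 := G1.Reach F1 V1 W1 with hC1d
  set A2 := G2.Reach F2 U2 V2 with hA2d
  set B2 := G2.Reach F2 U2 W2 with hB2d
  set C2 := G2.Reach F2 V2 W2 with hC2d
  set full1 := ∀ x : ↥S1, G1.Reach F1 x U1 ∨ G1.Reach F1 x V1 ∨ G1.Reach F1 x W1 with hfull1d
  set full2 := ∀ x : ↥S2, G2.Reach F2 x U2 ∨ G2.Reach F2 x V2 ∨ G2.Reach F2 x W2 with hfull2d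
  -- characterizations
  have cT1 : G1.IsSpanningTree F1 ↔ n1 + 1 = s1 ∧ A1 ∧ B1 ∧ C1 ∧ full1 :=
    G1.isSpanningTree_iff_atoms U1 V1 W1
  have cT2 : G2.IsSpanningTree F2 ↔ n2 + 1 = s2 ∧ A2 ∧ B2 ∧ C2 ∧ full2 :=
    G2.isSpanningTree_iff_atoms U2 V2 W2
  have c3_1 : G1.IsSpanningForest {{U1}, {V1}, {W1}} F1 ↔
      n1 + 3 = s1 ∧ ¬A1 ∧ ¬B1 ∧ ¬C1 ∧ full1 :=
    G1.isSpanningForest_triple_iff hUV1 hUW1 hVW1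
  have c3_2 : G2.IsSpanningForest {{U2}, {V2}, {W2}} F2 ↔
      n2 + 3 = s2 ∧ ¬A2 ∧ ¬B2 ∧ ¬C2 ∧ full2 :=
    G2.isSpanningForest_triple_iff hUV2 hUW2 hVW2
  have cu_1 : G1.IsSpanningForest {{U1}, {V1, W1}} F1 ↔
      n1 + 2 = s1 ∧ C1 ∧ ¬A1 ∧ ¬B1 ∧ full1 :=
    G1.isSpanningForest_pair_iff hUV1 hUW1
  have cu_2 : G2.IsSpanningForest {{U2}, {V2, W2}} F2 ↔
      n2 + 2 = s2 ∧ C2 ∧ ¬A2 ∧ ¬B2 ∧ full2 :=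
    G2.isSpanningForest_pair_iff hUV2 hUW2
  have cv_1 : G1.IsSpanningForest {{V1}, {U1, W1}} F1 ↔
      n1 + 2 = s1 ∧ B1 ∧ ¬A1 ∧ ¬C1 ∧ full1 := by
    rw [G1.isSpanningForest_pair_iff hVU1 hVW1]
    constructor
    · rintro ⟨h1, h2, h3, h4, h5⟩
      refine ⟨h1, h2, fun h => h3 (G1.reach_symm h), h4, fun x => ?_⟩
      rcases h5 x with h | h | h
      · exact Or.inr (Or.inl h)
      · exact Or.inl h
      · exact Or.inr (Or.inr h)
    · rintro ⟨h1, h2, h3, h4, h5⟩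
      refine ⟨h1, h2, fun h => h3 (G1.reach_symm h), h4, fun x => ?_⟩
      rcases h5 x with h | h | h
      · exact Or.inr (Or.inl h)
      · exact Or.inl h
      · exact Or.inr (Or.inr h)
  have cv_2 : G2.IsSpanningForest {{V2}, {U2, W2}} F2 ↔
      n2 + 2 = s2 ∧ B2 ∧ ¬A2 ∧ ¬C2 ∧ full2 := by
    rw [G2.isSpanningForest_pair_iff hVU2 hVW2]
    constructor
    · rintro ⟨h1, h2, h3, h4, h5⟩
      refine ⟨h1, h2, fun h => h3 (G2.reach_symm h), h4, fun x => ?_⟩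
      rcases h5 x with h | h | h
      · exact Or.inr (Or.inl h)
      · exact Or.inl h
      · exact Or.inr (Or.inr h)
    · rintro ⟨h1, h2, h3, h4, h5⟩
      refine ⟨h1, h2, fun h => h3 (G2.reach_symm h), h4, fun x => ?_⟩
      rcases h5 x with h | h | h
      · exact Or.inr (Or.inl h)
      · exact Or.inl h
      · exact Or.inr (Or.inr h)
  have cw_1 : G1.IsSpanningForest {{W1}, {U1, V1}} F1 ↔
      n1 + 2 = s1 ∧ A1 ∧ ¬B1 ∧ ¬C1 ∧ full1 := by
    rw [G1.isSpanningForest_pair_iff hWU1 hWV1]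
    constructor
    · rintro ⟨h1, h2, h3, h4, h5⟩
      refine ⟨h1, h2, fun h => h3 (G1.reach_symm h), fun h => h4 (G1.reach_symm h), fun x => ?_⟩
      rcases h5 x with h | h | h
      · exact Or.inr (Or.inr h)
      · exact Or.inl h
      · exact Or.inr (Or.inl h)
    · rintro ⟨h1, h2, h3, h4, h5⟩
      refine ⟨h1, h2, fun h => h3 (G1.reach_symm h), fun h => h4 (G1.reach_symm h), fun x => ?_⟩
      rcases h5 x with h | h | h
      · exact Or.inr (Or.inl h)
      · exact Or.inr (Or.inr h)
      · exact Or.inl h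
  have cw_2 : G2.IsSpanningForest {{W2}, {U2, V2}} F2 ↔
      n2 + 2 = s2 ∧ A2 ∧ ¬B2 ∧ ¬C2 ∧ full2 := by
    rw [G2.isSpanningForest_pair_iff hWU2 hWV2]
    constructor
    · rintro ⟨h1, h2, h3, h4, h5⟩
      refine ⟨h1, h2, fun h => h3 (G2.reach_symm h), fun h => h4 (G2.reach_symm h), fun x => ?_⟩
      rcases h5 x with h | h | h
      · exact Or.inr (Or.inr h)
      · exact Or.inl h
      · exact Or.inr (Or.inl h)
    · rintro ⟨h1, h2, h3, h4, h5⟩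
      refine ⟨h1, h2, fun h => h3 (G2.reach_symm h), fun h => h4 (G2.reach_symm h), fun x => ?_⟩
      rcases h5 x with h | h | h
      · exact Or.inr (Or.inl h)
      · exact Or.inr (Or.inr h)
      · exact Or.inl h
  -- geometry of the cut
  set c1 : Fin 3 → ↥S1 := ![U1, V1, W1] with hc1d
  set c2 : Fin 3 → ↥S2 := ![U2, V2, W2] with hc2d
  have hcc : ∀ i, ((c1 i : V)) = (c2 i : V) := by
    intro i; fin_cases i <;> rfl
  have hK : ∀ x : V, x ∈ S1 → x ∈ S2 → ∃ i, x = ↑(c1 i) := by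
    intro x hx1 hx2
    have hx : x ∈ S1 ∩ S2 := Finset.mem_inter.mpr ⟨hx1, hx2⟩
    rw [hinter] at hx
    simp only [Finset.mem_insert, Finset.mem_singleton] at hx
    rcases hx with rfl | rfl | rfl
    · exact ⟨0, rfl⟩
    · exact ⟨1, rfl⟩
    · exact ⟨2, rfl⟩
  have cardV : Fintype.card V + 3 = S1.card + S2.card := by
    have h := Finset.card_union_add_card_inter S1 S2
    rw [hcover, hinter] at h
    have h3 : ({u, v, w} : Finset V).card = 3 := by
      rw [Finset.card_insert_of_notMem (by simp [huv, huw]),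
        Finset.card_insert_of_notMem (by simp [hvw]), Finset.card_singleton]
    rw [Finset.card_univ, h3] at h
    omega
  have hs1c : s1 = S1.card := Fintype.card_coe S1
  have hs2c : s2 = S2.card := Fintype.card_coe S2
  -- counting bounds
  have hfullc1 : full1 → ∀ x : ↥S1, ∃ i, G1.Reach F1 x (c1 i) := by
    intro hf x
    rcases hf x with h | h | h
    · exact ⟨0, h⟩
    · exact ⟨1, h⟩
    · exact ⟨2, h⟩
  have hfullc2 : full2 → ∀ x : ↥S2, ∃ i, G2.Reach F2 x (c2 i) := by
    intro hf x
    rcases hf x with h | h | h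
    · exact ⟨0, h⟩
    · exact ⟨1, h⟩
    · exact ⟨2, h⟩
  have cnt1_3 : full1 → s1 ≤ n1 + 3 := fun hf => G1.card_le_full3 F1 c1 (hfullc1 hf)
  have cnt2_3 : full2 → s2 ≤ n2 + 3 := fun hf => G2.card_le_full3 F2 c2 (hfullc2 hf)
  have cnt1_2 : full1 → (A1 ∨ B1 ∨ C1) → s1 ≤ n1 + 2 := fun hf h =>
    G1.card_le_full2 F1 c1 (hfullc1 hf) h
  have cnt2_2 : full2 → (A2 ∨ B2 ∨ C2) → s2 ≤ n2 + 2 := fun hf h =>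
    G2.card_le_full2 F2 c2 (hfullc2 hf) h
  have cnt1_1 : full1 → A1 → B1 → s1 ≤ n1 + 1 := fun hf h1 h2 =>
    G1.card_le_full1 F1 c1 (hfullc1 hf) h1 h2
  have cnt2_1 : full2 → A2 → B2 → s2 ≤ n2 + 1 := fun hf h1 h2 =>
    G2.card_le_full1 F2 c2 (hfullc2 hf) h1 h2
  -- lifting
  have lift1' : ∀ {a b : ↥S1}, G1.Reach F1 a b → G.Reach (glue F1 F2) ↑a ↑b :=
    fun h => lift1 (F2 := F2) hsrc1 htgt1 hsrc2 htgt2 h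
  have lift2' : ∀ {a b : ↥S2}, G2.Reach F2 a b → G.Reach (glue F1 F2) ↑a ↑b :=
    fun h => lift2 (F1 := F1) hsrc1 htgt1 hsrc2 htgt2 h
  have build : G.Reach (glue F1 F2) u v → G.Reach (glue F1 F2) u w → full1 → full2 →
      ∀ x y : V, G.Reach (glue F1 F2) x y := by
    intro huv' huw' hf1 hf2
    refine G.reach_total_of_hubs huv' huw' ?_
    intro x
    have hx : x ∈ S1 ∪ S2 := by rw [hcover]; exact Finset.mem_univ x
    rcases Finset.mem_union.mp hx with hx1 | hx2
    · rcases hf1 ⟨x, hx1⟩ with h | h | h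
      · exact Or.inl (lift1' h)
      · exact Or.inr (Or.inl (lift1' h))
      · exact Or.inr (Or.inr (lift1' h))
    · rcases hf2 ⟨x, hx2⟩ with h | h | h
      · exact Or.inl (lift2' h)
      · exact Or.inr (Or.inl (lift2' h))
      · exact Or.inr (Or.inr (lift2' h))
  by_cases ht : G.IsSpanningTree (glue F1 F2)
  · -- spanning tree: find the unique matching configuration
    rw [if_pos ht]
    obtain ⟨htot, hcard⟩ := ht
    have hnn : n1 + n2 + 4 = s1 + s2 := by
      rw [card_glue] at hcard
      omega
    have DEC := fun {x y : V} (h : G.Reach (glue F1 F2) x y) =>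
      reach_glue_decomp (c1 := c1) (c2 := c2) hsrc1 htgt1 hsrc2 htgt2 hcc hK h
    have hf1 : full1 := by
      intro x
      rcases (DEC (htot ↑x u)).1 x.2 hu1 with h | ⟨i, j, h1, _, _⟩
      · exact Or.inl h
      · fin_cases i
        · exact Or.inl h1
        · exact Or.inr (Or.inl h1)
        · exact Or.inr (Or.inr h1)
    have hf2 : full2 := by
      intro x
      rcases (DEC (htot ↑x u)).2.2.2 x.2 hu2 with h | ⟨i, j, h1, _, _⟩
      · exact Or.inl h
      · fin_cases i
        · exact Or.inl h1
        · exact Or.inr (Or.inl h1)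
        · exact Or.inr (Or.inr h1)
    have cutM : ∀ i j, cutReach G1 G2 F1 F2 c1 c2 i j := by
      intro i j
      rcases (DEC (htot ↑(c1 i) ↑(c1 j))).1 (c1 i).2 (c1 j).2 with h | ⟨i', j', h1, h2, h3⟩
      · exact Relation.ReflTransGen.single (Or.inl h)
      · exact Relation.ReflTransGen.head (Or.inl h1) (h2.tail (Or.inl h3))
    have hJ : ∀ i j, cutRel G1 G2 F1 F2 c1 c2 i j ∨
        ∃ k, cutRel G1 G2 F1 F2 c1 c2 i k ∧ cutRel G1 G2 F1 F2 c1 c2 k j :=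
      fun i j => cutReach_compress (cutM i j)
    have hJuv : (A1 ∨ A2) ∨ ((B1 ∨ B2) ∧ (C1 ∨ C2)) := by
      rcases hJ 0 1 with h | ⟨k, h1, h2⟩
      · exact Or.inl h
      · fin_cases k
        · exact Or.inl h2
        · exact Or.inl h1
        · exact Or.inr ⟨h1, cutRel_symm h2⟩
    have hJuw : (B1 ∨ B2) ∨ ((A1 ∨ A2) ∧ (C1 ∨ C2)) := by
      rcases hJ 0 2 with h | ⟨k, h1, h2⟩
      · exact Or.inl h
      · fin_cases k
        · exact Or.inl h2
        · exact Or.inr ⟨h1, h2⟩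
        · exact Or.inl h1
    have pat1 : (A1 ∧ B1 ∧ C1) ∨ (A1 ∧ ¬B1 ∧ ¬C1) ∨ (¬A1 ∧ B1 ∧ ¬C1) ∨
        (¬A1 ∧ ¬B1 ∧ C1) ∨ (¬A1 ∧ ¬B1 ∧ ¬C1) := by
      by_cases hA : A1 <;> by_cases hB : B1 <;> by_cases hC : C1
      · exact Or.inl ⟨hA, hB, hC⟩
      · exact absurd ((G1.reach_symm hA).trans hB) hC
      · exact absurd (hA.trans hC) hB
      · exact Or.inr (Or.inl ⟨hA, hB, hC⟩)
      · exact absurd (hB.trans (G1.reach_symm hC)) hA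
      · exact Or.inr (Or.inr (Or.inl ⟨hA, hB, hC⟩))
      · exact Or.inr (Or.inr (Or.inr (Or.inl ⟨hA, hB, hC⟩)))
      · exact Or.inr (Or.inr (Or.inr (Or.inr ⟨hA, hB, hC⟩)))
    have pat2 : (A2 ∧ B2 ∧ C2) ∨ (A2 ∧ ¬B2 ∧ ¬C2) ∨ (¬A2 ∧ B2 ∧ ¬C2) ∨
        (¬A2 ∧ ¬B2 ∧ C2) ∨ (¬A2 ∧ ¬B2 ∧ ¬C2) := by
      by_cases hA : A2 <;> by_cases hB : B2 <;> by_cases hC : C2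
      · exact Or.inl ⟨hA, hB, hC⟩
      · exact absurd ((G2.reach_symm hA).trans hB) hC
      · exact absurd (hA.trans hC) hB
      · exact Or.inr (Or.inl ⟨hA, hB, hC⟩)
      · exact absurd (hB.trans (G2.reach_symm hC)) hA
      · exact Or.inr (Or.inr (Or.inl ⟨hA, hB, hC⟩))
      · exact Or.inr (Or.inr (Or.inr (Or.inl ⟨hA, hB, hC⟩)))
      · exact Or.inr (Or.inr (Or.inr (Or.inr ⟨hA, hB, hC⟩)))
    simp only [cT1, cT2, c3_1, c3_2, cu_1, cu_2, cv_1, cv_2, cw_1, cw_2]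
    rcases pat1 with ⟨a1, b1, g1⟩ | ⟨a1, b1, g1⟩ | ⟨a1, b1, g1⟩ | ⟨a1, b1, g1⟩ | ⟨a1, b1, g1⟩ <;>
      rcases pat2 with ⟨a2, b2, g2⟩ | ⟨a2, b2, g2⟩ | ⟨a2, b2, g2⟩ | ⟨a2, b2, g2⟩ | ⟨a2, b2, g2⟩
    -- pat1 = (A1 B1 C1) : tree on side 1
    · -- pat2 = full tree too: impossible by counting
      exfalso
      have q1 := cnt1_1 hf1 a1 b1
      have q2 := cnt2_1 hf2 a2 b2
      omega
    · exfalso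
      have q1 := cnt1_1 hf1 a1 b1
      have q2 := cnt2_2 hf2 (Or.inl a2)
      omega
    · exfalso
      have q1 := cnt1_1 hf1 a1 b1
      have q2 := cnt2_2 hf2 (Or.inr (Or.inl b2))
      omega
    · exfalso
      have q1 := cnt1_1 hf1 a1 b1
      have q2 := cnt2_2 hf2 (Or.inr (Or.inr g2))
      omega
    · -- term 8 : tree on side 1, isolated triple on side 2
      have q1 := cnt1_1 hf1 a1 b1
      have q2 := cnt2_3 hf2
      have e1 : n1 + 1 = s1 := by omega
      have e2 : n2 + 3 = s2 := by omega
      have d1 : ¬(n1 + 2 = s1) := by omega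
      have d2 : ¬(n1 + 3 = s1) := by omega
      have d3 : ¬(n2 + 1 = s2) := by omega
      have d4 : ¬(n2 + 2 = s2) := by omega
      simp only [e1, e2, d1, d2, d3, d4, a1, b1, g1, a2, b2, g2, hf1, hf2,
        eq_self_iff_true, true_and, and_true, not_false_iff, false_and, and_false,
        if_true, if_false, ite_false, ite_true, add_zero, zero_add,
        eq_false, eq_true, not_true, not_false_eq_true]
    -- pat1 = (A1 only) : parts {W1},{U1,V1}
    · exfalso
      have q1 := cnt1_2 hf1 (Or.inl a1)
      have q2 := cnt2_1 hf2 a2 b2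
      omega
    · -- (A1 only, A2 only): cut vertex w disconnected from u: contradiction with hJuw
      exfalso
      rcases hJuw with h | ⟨-, h⟩
      · rcases h with h | h
        · exact b1 h
        · exact b2 h
      · rcases h with h | h
        · exact g1 h
        · exact g2 h
    · -- term 7 : (A1, B2)
      have q1 := cnt1_2 hf1 (Or.inl a1)
      have q2 := cnt2_2 hf2 (Or.inr (Or.inl b2))
      have e1 : n1 + 2 = s1 := by omega
      have e2 : n2 + 2 = s2 := by omega
      have d1 : ¬(n1 + 1 = s1) := by omega
      have d2 : ¬(n1 + 3 = s1) := by omega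
      have d3 : ¬(n2 + 1 = s2) := by omega
      have d4 : ¬(n2 + 3 = s2) := by omega
      simp only [e1, e2, d1, d2, d3, d4, a1, b1, g1, a2, b2, g2, hf1, hf2,
        eq_self_iff_true, true_and, and_true, not_false_iff, false_and, and_false,
        if_true, if_false, ite_false, ite_true, add_zero, zero_add,
        eq_false, eq_true, not_true, not_false_eq_true]
    · -- term 6 : (A1, C2)
      have q1 := cnt1_2 hf1 (Or.inl a1)
      have q2 := cnt2_2 hf2 (Or.inr (Or.inr g2))
      have e1 : n1 + 2 = s1 := by omega
      have e2 : n2 + 2 = s2 := by omega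
      have d1 : ¬(n1 + 1 = s1) := by omega
      have d2 : ¬(n1 + 3 = s1) := by omega
      have d3 : ¬(n2 + 1 = s2) := by omega
      have d4 : ¬(n2 + 3 = s2) := by omega
      simp only [e1, e2, d1, d2, d3, d4, a1, b1, g1, a2, b2, g2, hf1, hf2,
        eq_self_iff_true, true_and, and_true, not_false_iff, false_and, and_false,
        if_true, if_false, ite_false, ite_true, add_zero, zero_add,
        eq_false, eq_true, not_true, not_false_eq_true]
    · -- (A1 only, none) : w disconnected
      exfalso
      rcases hJuw with h | ⟨-, h⟩
      · rcases h with h | h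
        · exact b1 h
        · exact b2 h
      · rcases h with h | h
        · exact g1 h
        · exact g2 h
    -- pat1 = (B1 only) : parts {V1},{U1,W1}
    · exfalso
      have q1 := cnt1_2 hf1 (Or.inr (Or.inl b1))
      have q2 := cnt2_1 hf2 a2 b2
      omega
    · -- term 5 : (B1, A2)
      have q1 := cnt1_2 hf1 (Or.inr (Or.inl b1))
      have q2 := cnt2_2 hf2 (Or.inl a2)
      have e1 : n1 + 2 = s1 := by omega
      have e2 : n2 + 2 = s2 := by omega
      have d1 : ¬(n1 + 1 = s1) := by omega
      have d2 : ¬(n1 + 3 = s1) := by omega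
      have d3 : ¬(n2 + 1 = s2) := by omega
      have d4 : ¬(n2 + 3 = s2) := by omega
      simp only [e1, e2, d1, d2, d3, d4, a1, b1, g1, a2, b2, g2, hf1, hf2,
        eq_self_iff_true, true_and, and_true, not_false_iff, false_and, and_false,
        if_true, if_false, ite_false, ite_true, add_zero, zero_add,
        eq_false, eq_true, not_true, not_false_eq_true]
    · -- (B1, B2): v disconnected : hJuv
      exfalso
      rcases hJuv with h | ⟨-, h⟩
      · rcases h with h | h
        · exact a1 h
        · exact a2 h
      · rcases h with h | h
        · exact g1 h
        · exact g2 h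
    · -- term 4 : (B1, C2)
      have q1 := cnt1_2 hf1 (Or.inr (Or.inl b1))
      have q2 := cnt2_2 hf2 (Or.inr (Or.inr g2))
      have e1 : n1 + 2 = s1 := by omega
      have e2 : n2 + 2 = s2 := by omega
      have d1 : ¬(n1 + 1 = s1) := by omega
      have d2 : ¬(n1 + 3 = s1) := by omega
      have d3 : ¬(n2 + 1 = s2) := by omega
      have d4 : ¬(n2 + 3 = s2) := by omega
      simp only [e1, e2, d1, d2, d3, d4, a1, b1, g1, a2, b2, g2, hf1, hf2,
        eq_self_iff_true, true_and, and_true, not_false_iff, false_and, and_false,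
        if_true, if_false, ite_false, ite_true, add_zero, zero_add,
        eq_false, eq_true, not_true, not_false_eq_true]
    · -- (B1, none) : v disconnected
      exfalso
      rcases hJuv with h | ⟨-, h⟩
      · rcases h with h | h
        · exact a1 h
        · exact a2 h
      · rcases h with h | h
        · exact g1 h
        · exact g2 h
    -- pat1 = (C1 only) : parts {U1},{V1,W1}
    · exfalso
      have q1 := cnt1_2 hf1 (Or.inr (Or.inr g1))
      have q2 := cnt2_1 hf2 a2 b2
      omega
    · -- term 3 : (C1, A2)
      have q1 := cnt1_2 hf1 (Or.inr (Or.inr g1))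
      have q2 := cnt2_2 hf2 (Or.inl a2)
      have e1 : n1 + 2 = s1 := by omega
      have e2 : n2 + 2 = s2 := by omega
      have d1 : ¬(n1 + 1 = s1) := by omega
      have d2 : ¬(n1 + 3 = s1) := by omega
      have d3 : ¬(n2 + 1 = s2) := by omega
      have d4 : ¬(n2 + 3 = s2) := by omega
      simp only [e1, e2, d1, d2, d3, d4, a1, b1, g1, a2, b2, g2, hf1, hf2,
        eq_self_iff_true, true_and, and_true, not_false_iff, false_and, and_false,
        if_true, if_false, ite_false, ite_true, add_zero, zero_add,
        eq_false, eq_true, not_true, not_false_eq_true]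
    · -- term 2 : (C1, B2)
      have q1 := cnt1_2 hf1 (Or.inr (Or.inr g1))
      have q2 := cnt2_2 hf2 (Or.inr (Or.inl b2))
      have e1 : n1 + 2 = s1 := by omega
      have e2 : n2 + 2 = s2 := by omega
      have d1 : ¬(n1 + 1 = s1) := by omega
      have d2 : ¬(n1 + 3 = s1) := by omega
      have d3 : ¬(n2 + 1 = s2) := by omega
      have d4 : ¬(n2 + 3 = s2) := by omega
      simp only [e1, e2, d1, d2, d3, d4, a1, b1, g1, a2, b2, g2, hf1, hf2,
        eq_self_iff_true, true_and, and_true, not_false_iff, false_and, and_false,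
        if_true, if_false, ite_false, ite_true, add_zero, zero_add,
        eq_false, eq_true, not_true, not_false_eq_true]
    · -- (C1, C2) : u disconnected : hJuv
      exfalso
      rcases hJuv with h | ⟨h, -⟩
      · rcases h with h | h
        · exact a1 h
        · exact a2 h
      · rcases h with h | h
        · exact b1 h
        · exact b2 h
    · -- (C1, none) : u disconnected
      exfalso
      rcases hJuv with h | ⟨h, -⟩
      · rcases h with h | h
        · exact a1 h
        · exact a2 h
      · rcases h with h | h
        · exact b1 h
        · exact b2 h
    -- pat1 = none : isolated triple on side 1
    · -- term 1 : (none, tree on side 2)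
      have q1 := cnt1_3 hf1
      have q2 := cnt2_1 hf2 a2 b2
      have e1 : n1 + 3 = s1 := by omega
      have e2 : n2 + 1 = s2 := by omega
      have d1 : ¬(n1 + 1 = s1) := by omega
      have d2 : ¬(n1 + 2 = s1) := by omega
      have d3 : ¬(n2 + 2 = s2) := by omega
      have d4 : ¬(n2 + 3 = s2) := by omega
      simp only [e1, e2, d1, d2, d3, d4, a1, b1, g1, a2, b2, g2, hf1, hf2,
        eq_self_iff_true, true_and, and_true, not_false_iff, false_and, and_false,
        if_true, if_false, ite_false, ite_true, add_zero, zero_add,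
        eq_false, eq_true, not_true, not_false_eq_true]
    · -- (none, A2) : w disconnected
      exfalso
      rcases hJuw with h | ⟨-, h⟩
      · rcases h with h | h
        · exact b1 h
        · exact b2 h
      · rcases h with h | h
        · exact g1 h
        · exact g2 h
    · -- (none, B2) : v disconnected
      exfalso
      rcases hJuv with h | ⟨-, h⟩
      · rcases h with h | h
        · exact a1 h
        · exact a2 h
      · rcases h with h | h
        · exact g1 h
        · exact g2 h
    · -- (none, C2) : u disconnected
      exfalso
      rcases hJuv with h | ⟨h, -⟩
      · rcases h with h | h
        · exact a1 h
        · exact a2 h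
      · rcases h with h | h
        · exact b1 h
        · exact b2 h
    · -- (none, none)
      exfalso
      rcases hJuv with h | ⟨h, -⟩
      · rcases h with h | h
        · exact a1 h
        · exact a2 h
      · rcases h with h | h
        · exact b1 h
        · exact b2 h
  · -- not a spanning tree: every configuration fails
    rw [if_neg ht]
    have mk : ∀ {P : Prop}, G.Reach (glue F1 F2) u v → G.Reach (glue F1 F2) u w →
        full1 → full2 → n1 + n2 + 1 = Fintype.card V → ¬ P → P ∨ True := by
      intro _ _ _ _ _ _ _; exact Or.inr trivial
    have mktree : G.Reach (glue F1 F2) u v → G.Reach (glue F1 F2) u w →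
        full1 → full2 → (n1 + n2) + 1 = Fintype.card V → False := by
      intro h1 h2 hf1 hf2 hcd
      exact ht ⟨build h1 h2 hf1 hf2, by rw [card_glue]; exact hcd⟩
    have k1 : ¬(G1.IsSpanningForest {{U1}, {V1}, {W1}} F1 ∧ G2.IsSpanningTree F2) := by
      rintro ⟨hx, hy⟩
      obtain ⟨e1, -, -, -, hf1⟩ := c3_1.mp hx
      obtain ⟨e2, ha2, hb2, -, hf2⟩ := cT2.mp hy
      exact mktree (lift2' ha2) (lift2' hb2) hf1 hf2 (by omega)
    have k2 : ¬(G1.IsSpanningForest {{U1}, {V1, W1}} F1 ∧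
        G2.IsSpanningForest {{V2}, {U2, W2}} F2) := by
      rintro ⟨hx, hy⟩
      obtain ⟨e1, hg1, -, -, hf1⟩ := cu_1.mp hx
      obtain ⟨e2, hb2, -, -, hf2⟩ := cv_2.mp hy
      exact mktree ((lift2' hb2).trans (G.reach_symm (lift1' hg1))) (lift2' hb2)
        hf1 hf2 (by omega)
    have k3 : ¬(G1.IsSpanningForest {{U1}, {V1, W1}} F1 ∧
        G2.IsSpanningForest {{W2}, {U2, V2}} F2) := by
      rintro ⟨hx, hy⟩
      obtain ⟨e1, hg1, -, -, hf1⟩ := cu_1.mp hx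
      obtain ⟨e2, ha2, -, -, hf2⟩ := cw_2.mp hy
      exact mktree (lift2' ha2) ((lift2' ha2).trans (lift1' hg1)) hf1 hf2 (by omega)
    have k4 : ¬(G1.IsSpanningForest {{V1}, {U1, W1}} F1 ∧
        G2.IsSpanningForest {{U2}, {V2, W2}} F2) := by
      rintro ⟨hx, hy⟩
      obtain ⟨e1, hb1, -, -, hf1⟩ := cv_1.mp hx
      obtain ⟨e2, hg2, -, -, hf2⟩ := cu_2.mp hy
      exact mktree ((lift1' hb1).trans (G.reach_symm (lift2' hg2))) (lift1' hb1)
        hf1 hf2 (by omega)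
    have k5 : ¬(G1.IsSpanningForest {{V1}, {U1, W1}} F1 ∧
        G2.IsSpanningForest {{W2}, {U2, V2}} F2) := by
      rintro ⟨hx, hy⟩
      obtain ⟨e1, hb1, -, -, hf1⟩ := cv_1.mp hx
      obtain ⟨e2, ha2, -, -, hf2⟩ := cw_2.mp hy
      exact mktree (lift2' ha2) (lift1' hb1) hf1 hf2 (by omega)
    have k6 : ¬(G1.IsSpanningForest {{W1}, {U1, V1}} F1 ∧
        G2.IsSpanningForest {{U2}, {V2, W2}} F2) := by
      rintro ⟨hx, hy⟩
      obtain ⟨e1, ha1, -, -, hf1⟩ := cw_1.mp hx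
      obtain ⟨e2, hg2, -, -, hf2⟩ := cu_2.mp hy
      exact mktree (lift1' ha1) ((lift1' ha1).trans (lift2' hg2)) hf1 hf2 (by omega)
    have k7 : ¬(G1.IsSpanningForest {{W1}, {U1, V1}} F1 ∧
        G2.IsSpanningForest {{V2}, {U2, W2}} F2) := by
      rintro ⟨hx, hy⟩
      obtain ⟨e1, ha1, -, -, hf1⟩ := cw_1.mp hx
      obtain ⟨e2, hb2, -, -, hf2⟩ := cv_2.mp hy
      exact mktree (lift1' ha1) (lift2' hb2) hf1 hf2 (by omega)
    have k8 : ¬(G1.IsSpanningTree F1 ∧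
        G2.IsSpanningForest {{U2}, {V2}, {W2}} F2) := by
      rintro ⟨hx, hy⟩
      obtain ⟨e1, ha1, hb1, -, hf1⟩ := cT1.mp hx
      obtain ⟨e2, -, -, -, hf2⟩ := c3_2.mp hy
      exact mktree (lift1' ha1) (lift1' hb1) hf1 hf2 (by omega)
    rw [if_neg k1, if_neg k2, if_neg k3, if_neg k4, if_neg k5, if_neg k6, if_neg k7, if_neg k8]
    simp

end MainIff


open MvPolynomial in
/-- **three-vertex join decomposition.**  If `G` is glued from `G'` (edges
`E1`, vertex set `S1`) and `G''` (edges `E2`, vertex set `S2`) along the three common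
vertices `S1 ∩ S2 = {u, v, w}`, then `Ψ_G` is the eight-term sum
`Φ'^{u|v|w}Ψ'' + Φ'^{u|vw}Φ''^{v|uw} + Φ'^{u|vw}Φ''^{w|uv} + Φ'^{v|uw}Φ''^{u|vw}
 + Φ'^{v|uw}Φ''^{w|uv} + Φ'^{w|uv}Φ''^{u|vw} + Φ'^{w|uv}Φ''^{v|uw} + Ψ'Φ''^{u|v|w}`. -/
theorem three_vertex_join_kirchhoff {E1 E2 V : Type*} [Fintype E1] [DecidableEq E1]
    [Fintype E2] [DecidableEq E2] [Fintype V] [DecidableEq V]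
    (S1 S2 : Finset V) (u v w : V) (huv : u ≠ v) (huw : u ≠ w) (hvw : v ≠ w)
    (hcover : S1 ∪ S2 = Finset.univ) (hinter : S1 ∩ S2 = {u, v, w})
    (hu1 : u ∈ S1) (hu2 : u ∈ S2) (hv1 : v ∈ S1) (hv2 : v ∈ S2)
    (hw1 : w ∈ S1) (hw2 : w ∈ S2)
    (G1 : Multigraph E1 ↥S1) (G2 : Multigraph E2 ↥S2) (G : Multigraph (E1 ⊕ E2) V)
    (hsrc1 : ∀ e, G.src (Sum.inl e) = ↑(G1.src e))
    (htgt1 : ∀ e, G.tgt (Sum.inl e) = ↑(G1.tgt e))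
    (hsrc2 : ∀ e, G.src (Sum.inr e) = ↑(G2.src e))
    (htgt2 : ∀ e, G.tgt (Sum.inr e) = ↑(G2.tgt e))
    (hconn : G.Connected) :
    G.kirchhoff
      = rename Sum.inl (G1.forestPoly {({⟨u, hu1⟩} : Finset ↥S1), {⟨v, hv1⟩}, {⟨w, hw1⟩}})
          * rename Sum.inr G2.kirchhoff
        + rename Sum.inl (G1.forestPoly {({⟨u, hu1⟩} : Finset ↥S1), {⟨v, hv1⟩, ⟨w, hw1⟩}})
          * rename Sum.inr (G2.forestPoly {({⟨v, hv2⟩} : Finset ↥S2), {⟨u, hu2⟩, ⟨w, hw2⟩}})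
        + rename Sum.inl (G1.forestPoly {({⟨u, hu1⟩} : Finset ↥S1), {⟨v, hv1⟩, ⟨w, hw1⟩}})
          * rename Sum.inr (G2.forestPoly {({⟨w, hw2⟩} : Finset ↥S2), {⟨u, hu2⟩, ⟨v, hv2⟩}})
        + rename Sum.inl (G1.forestPoly {({⟨v, hv1⟩} : Finset ↥S1), {⟨u, hu1⟩, ⟨w, hw1⟩}})
          * rename Sum.inr (G2.forestPoly {({⟨u, hu2⟩} : Finset ↥S2), {⟨v, hv2⟩, ⟨w, hw2⟩}})
        + rename Sum.inl (G1.forestPoly {({⟨v, hv1⟩} : Finset ↥S1), {⟨u, hu1⟩, ⟨w, hw1⟩}})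
          * rename Sum.inr (G2.forestPoly {({⟨w, hw2⟩} : Finset ↥S2), {⟨u, hu2⟩, ⟨v, hv2⟩}})
        + rename Sum.inl (G1.forestPoly {({⟨w, hw1⟩} : Finset ↥S1), {⟨u, hu1⟩, ⟨v, hv1⟩}})
          * rename Sum.inr (G2.forestPoly {({⟨u, hu2⟩} : Finset ↥S2), {⟨v, hv2⟩, ⟨w, hw2⟩}})
        + rename Sum.inl (G1.forestPoly {({⟨w, hw1⟩} : Finset ↥S1), {⟨u, hu1⟩, ⟨v, hv1⟩}})
          * rename Sum.inr (G2.forestPoly {({⟨v, hv2⟩} : Finset ↥S2), {⟨u, hu2⟩, ⟨w, hw2⟩}})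
        + rename Sum.inl G1.kirchhoff
          * rename Sum.inr
            (G2.forestPoly {({⟨u, hu2⟩} : Finset ↥S2), {⟨v, hv2⟩}, {⟨w, hw2⟩}}) := by
  classical
  unfold Multigraph.kirchhoff Multigraph.forestPoly
  rw [sum_finset_sum_glue (fun T => if G.IsSpanningTree T then
        ∏ e ∈ Tᶜ, (X e : MvPolynomial (E1 ⊕ E2) ℚ) else 0)]
  simp only [rename_sum_ite]
  rw [pair_polys', pair_polys', pair_polys', pair_polys', pair_polys', pair_polys',
    pair_polys', pair_polys']
  simp only [← Finset.sum_add_distrib]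
  refine Finset.sum_congr rfl fun F1 _ => Finset.sum_congr rfl fun F2 _ => ?_
  exact pointwise_ite S1 S2 u v w huv huw hvw hcover hinter hu1 hu2 hv1 hv2 hw1 hw2
    G1 G2 G hsrc1 htgt1 hsrc2 htgt2 F1 F2 _
end

section
/- Two-vertex reducible graphs have doubled denominators: if G is the two-vertex join of G_1 and G_2, with edges 1, 2 ∈ G_1 and 3, 4 ∈ G_2, then the product Ψ^{13,24}_G · Ψ^{14,23}_G is a perfect square of a polynomial, namely (Ψ^{13,24}_G)^2. -/
namespace Multigraph

variable {E V : Type*}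

/-- The matrix `M_G(·,·)_K`: the reduced block matrix `[[A, 𝓔],[-𝓔ᵀ, 0]]` (one vertex `v0`
removed) in which the variables of the edges in `K` have been set to `0`. -/
noncomputable def bigMatK (G : Multigraph E V) [DecidableEq E] [DecidableEq V] (v0 : V) (K : Finset E) :
    Matrix (E ⊕ {v : V // v ≠ v0}) (E ⊕ {v : V // v ≠ v0}) (MvPolynomial E ℚ) :=
  Matrix.fromBlocks (Matrix.diagonal fun e => if e ∈ K then 0 else MvPolynomial.X e)
    (Matrix.of fun e (v : {v : V // v ≠ v0}) => G.inc (MvPolynomial E ℚ) e ↑v)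
    (Matrix.of fun (v : {v : V // v ≠ v0}) e => -G.inc (MvPolynomial E ℚ) e ↑v)
    0

/-- The Dodgson polynomial `Ψ^{I,J}_{G,K}`: the determinant of `M_G` with the rows indexed
by `I` and the columns indexed by `J` deleted and the variables of `K` set to zero.  The
rows and columns are enumerated in increasing order, which fixes the sign. -/
noncomputable def dodgson (G : Multigraph E V) [Fintype E] [LinearOrder E] [Fintype V]
    [DecidableEq V] (v0 : V) (I J K : Finset E) : MvPolynomial E ℚ :=
  if h : I.card = J.card then
    Matrix.det (Matrix.of fun r c : Fin (Iᶜ.card) ⊕ {v : V // v ≠ v0} =>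
      G.bigMatK v0 K
        (Sum.map (fun i => ((Iᶜ.orderIsoOfFin rfl) i : E)) id r)
        (Sum.map (fun j => ((Jᶜ.orderIsoOfFin (by simp [Finset.card_compl, h])) j : E)) id c))
  else 0

/-- The determinant of the square submatrix of the reduced signed incidence matrix of `G`
(with the column of the vertex `v0` removed) given by the rows indexed by the edge set `S`
(rows and columns enumerated in increasing order); junk value `0` if `S` does not have
`|V| - 1` elements. -/
noncomputable def rowDet (G : Multigraph E V) [Fintype E] [LinearOrder E] [Fintype V]
    [LinearOrder V] (v0 : V) (S : Finset E) : ℚ :=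
  if h : S.card = Fintype.card V - 1 then
    Matrix.det (Matrix.of fun i j : Fin (Fintype.card V - 1) =>
      G.inc ℚ ((S.orderIsoOfFin h) i : E)
        (((Finset.univ.erase v0).orderIsoOfFin
          (by rw [Finset.card_erase_of_mem (Finset.mem_univ v0), Finset.card_univ])) j : V))
  else 0

/-- `𝓔_G(S)`: the determinant of the reduced incidence matrix with the rows `S` deleted
(and the column of `v0` deleted). -/
noncomputable def detE (G : Multigraph E V) [Fintype E] [LinearOrder E] [Fintype V]
    [LinearOrder V] (v0 : V) (S : Finset E) : ℚ :=
  G.rowDet v0 Sᶜ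

end Multigraph


open Matrix

section Generic

variable {R : Type*} [CommRing R] {m n : Type*} [DecidableEq m] [Fintype m]
  [DecidableEq n] [Fintype n]

/-- determinant under two different reindexings -/
lemma det_submatrix_eq_sign_mul (A : Matrix n n R) (e₁ e₂ : m ≃ n) :
    ∃ s : ℤ, (s = 1 ∨ s = -1) ∧ (A.submatrix e₁ e₂).det = (s : R) * A.det := by
  have h : A.submatrix e₁ e₂ = (A.submatrix e₂ e₂).submatrix (e₁.trans e₂.symm) id := by
    ext i j
    simp [Matrix.submatrix_apply]
  refine ⟨((Equiv.Perm.sign (e₁.trans e₂.symm) : ℤˣ) : ℤ), ?_, ?_⟩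
  · rcases Int.units_eq_one_or (Equiv.Perm.sign (e₁.trans e₂.symm)) with h1 | h1 <;>
      simp [h1]
  · rw [h, Matrix.det_permute, Matrix.det_submatrix_equiv_self]

lemma vecMul_single_one (A : Matrix n n R) (i : n) :
    Pi.single i (1 : R) ᵥ* A = A i := by
  funext j
  simp [Matrix.vecMul, dotProduct, Pi.single_apply]

end Generic

section Jacobi

variable {R : Type*} [CommRing R] [IsDomain R] {n : Type*} [DecidableEq n] [Fintype n]

/-- the complement equiv for two distinct indices -/
def twoComplEquiv (i j : n) (hij : i ≠ j) :
    (Fin 2 ⊕ {x : n // x ≠ i ∧ x ≠ j}) ≃ n where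
  toFun := Sum.elim (![i, j]) (fun x => x.val)
  invFun x := if h1 : x = i then Sum.inl 0 else if h2 : x = j then Sum.inl 1
    else Sum.inr ⟨x, h1, h2⟩
  left_inv := by
    rintro (u | x)
    · fin_cases u
      · simp
      · simp [hij.symm]
    · simp [x.prop.1, x.prop.2]
  right_inv := by
    intro x
    by_cases h1 : x = i
    · simp [h1]
    by_cases h2 : x = j
    · simp [h1, h2, hij.symm]
    · simp [h1, h2]

lemma jacobi_two (A : Matrix n n R) (hdet : A.det ≠ 0) {i j : n} (hij : i ≠ j) (k l : n) :
    A.det * ((A.updateRow i (Pi.single k 1)).updateRow j (Pi.single l 1)).det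
      = A.adjugate k i * A.adjugate l j - A.adjugate k j * A.adjugate l i := by
  classical
  set B := A.adjugate with hB
  set A' := (A.updateRow i (Pi.single k 1)).updateRow j (Pi.single l 1) with hA'
  -- the product A' * B
  have hrow_i : A' i = Pi.single k 1 := by
    rw [hA', Matrix.updateRow_ne hij, Matrix.updateRow_self]
  have hrow_j : A' j = Pi.single l 1 := by
    rw [hA', Matrix.updateRow_self]
  have hrow_other : ∀ r, r ≠ i → r ≠ j → A' r = A r := by
    intro r h1 h2
    rw [hA', Matrix.updateRow_ne h2, Matrix.updateRow_ne h1]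
  have hprod : A' * B = Matrix.of fun r s =>
      if r = i then B k s else if r = j then B l s else (A.det • (1 : Matrix n n R)) r s := by
    ext r s
    rw [Matrix.mul_apply]
    by_cases h1 : r = i
    · subst h1
      simp [hrow_i, Pi.single_apply, ite_mul]
    by_cases h2 : r = j
    · subst h2
      simp [hrow_j, h1, Pi.single_apply, ite_mul]
    · have : ∑ t, A' r t * B t s = (A * B) r s := by
        rw [Matrix.mul_apply]
        exact Finset.sum_congr rfl fun t _ => by rw [hrow_other r h1 h2]
      rw [this, hB, Matrix.mul_adjugate]
      simp [h1, h2]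
  -- reindex the right hand side
  set C := {x : n // x ≠ i ∧ x ≠ j} with hC
  set e := twoComplEquiv i j hij with he
  have hcard : 2 + Fintype.card C = Fintype.card n := by
    simpa using (Fintype.card_congr e)
  have hcard2 : 2 ≤ Fintype.card n := by omega
  set Rm : Matrix n n R := Matrix.of fun r s =>
      if r = i then B k s else if r = j then B l s else (A.det • (1 : Matrix n n R)) r s
    with hRm
  have hsub : Rm.submatrix e e = Matrix.fromBlocks
      !![B k i, B k j; B l i, B l j]
      (Matrix.of fun (r : Fin 2) (y : C) => if r = 0 then B k y.val else B l y.val)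
      0 (A.det • (1 : Matrix C C R)) := by
    ext (u | x) (v | y)
    · fin_cases u <;> fin_cases v <;>
        simp [he, twoComplEquiv, hRm, hij, hij.symm, Matrix.one_apply]
    · fin_cases u <;>
        simp [he, twoComplEquiv, hRm, hij, hij.symm]
    · fin_cases v <;>
        simp [he, twoComplEquiv, hRm, x.prop.1, x.prop.2, Matrix.one_apply, Subtype.ext_iff]
    · simp [he, twoComplEquiv, hRm, x.prop.1, x.prop.2, Matrix.one_apply, Subtype.ext_iff]
  have hdetRm : Rm.det = (B k i * B l j - B k j * B l i) * A.det ^ (Fintype.card n - 2) := by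
    rw [← Matrix.det_submatrix_equiv_self e Rm, hsub, Matrix.det_fromBlocks_zero₂₁,
      Matrix.det_fin_two_of, Matrix.det_smul, Matrix.det_one, mul_one]
    congr 2
    omega
  have hmain : A'.det * A.det ^ (Fintype.card n - 1)
      = (B k i * B l j - B k j * B l i) * A.det ^ (Fintype.card n - 2) := by
    rw [← Matrix.det_adjugate, ← hB, ← Matrix.det_mul, hprod]
    exact hdetRm
  have hpow : A.det ^ (Fintype.card n - 1) = A.det ^ (Fintype.card n - 2) * A.det := by
    rw [← pow_succ]
    congr 1
    omega
  have hX : A.det ^ (Fintype.card n - 2) ≠ 0 := pow_ne_zero _ hdet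
  apply mul_right_cancel₀ hX
  calc A.det * A'.det * A.det ^ (Fintype.card n - 2)
      = A'.det * A.det ^ (Fintype.card n - 1) := by rw [hpow]; ring
    _ = (B k i * B l j - B k j * B l i) * A.det ^ (Fintype.card n - 2) := hmain

end Jacobi

section DimArg

variable {K : Type*} [Field K]

lemma exists_ne_zero_map_eq_zero {M N : Type*} [AddCommGroup M] [Module K M]
    [AddCommGroup N] [Module K N] [FiniteDimensional K M] [FiniteDimensional K N]
    (f : M →ₗ[K] N) (h : Module.finrank K N < Module.finrank K M) :
    ∃ x, x ≠ 0 ∧ f x = 0 := by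
  by_contra hc
  push_neg at hc
  have hinj : Function.Injective f := by
    rw [← LinearMap.ker_eq_bot]
    apply (Submodule.eq_bot_iff _).mpr
    intro x hx
    by_contra hx0
    exact hc x hx0 hx
  have := LinearMap.finrank_le_finrank_of_injective hinj
  omega

/-- the sum-of-coordinates functional -/
noncomputable def sumCoords (ι : Type*) [Fintype ι] : (ι → K) →ₗ[K] K where
  toFun g := ∑ i, g i
  map_add' g h := by simp [Finset.sum_add_distrib]
  map_smul' c g := by simp [Finset.mul_sum]

lemma finrank_ker_sumCoords (ι : Type*) [Fintype ι] [DecidableEq ι] [Nonempty ι] :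
    Module.finrank K (LinearMap.ker (sumCoords (K := K) ι)) = Fintype.card ι - 1 := by
  have hsurj : Function.Surjective (sumCoords (K := K) ι) := by
    intro x
    obtain ⟨i⟩ := ‹Nonempty ι›
    exact ⟨Pi.single i x, by simp [sumCoords]⟩
  have h1 := LinearMap.finrank_range_add_finrank_ker (sumCoords (K := K) ι)
  rw [LinearMap.range_eq_top.mpr hsurj] at h1
  simp only [finrank_top, Module.finrank_self] at h1
  have h2 : Module.finrank K (ι → K) = Fintype.card ι := Module.finrank_pi K
  omega

end DimArg
namespace Multigraph

open Matrix

variable {E V : Type*} [Fintype E] [LinearOrder E] [Fintype V] [DecidableEq V]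

lemma sum_indicator_ne {S : Type*} [CommRing S] (v0 : V) (g : V → S) (u : V) :
    (∑ v : {v : V // v ≠ v0}, g ↑v * (if u = ↑v then (1 : S) else 0))
      = if u = v0 then 0 else g u := by
  by_cases hu : u = v0
  · subst hu
    rw [if_pos rfl]
    apply Finset.sum_eq_zero
    intro v _
    rw [if_neg (fun h => v.prop h.symm), mul_zero]
  · rw [if_neg hu, Fintype.sum_eq_single ⟨u, hu⟩]
    · simp
    · intro v hne
      rw [if_neg, mul_zero]
      intro h
      exact hne (Subtype.ext h.symm)

lemma sum_inc_eq (G : Multigraph E V) (v0 : V) {S : Type*} [CommRing S]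
    (g : V → S) (hg : g v0 = 0) (e : E) :
    ∑ v : {v : V // v ≠ v0}, g ↑v * G.inc S e ↑v = g (G.src e) - g (G.tgt e) := by
  have h : ∀ v : {v : V // v ≠ v0}, g ↑v * G.inc S e ↑v
      = g ↑v * (if G.src e = ↑v then (1:S) else 0)
        - g ↑v * (if G.tgt e = ↑v then (1:S) else 0) := by
    intro v
    rw [Multigraph.inc, mul_sub]
  rw [Finset.sum_congr rfl (fun v _ => h v), Finset.sum_sub_distrib,
    sum_indicator_ne v0 g (G.src e), sum_indicator_ne v0 g (G.tgt e)]
  by_cases h1 : G.src e = v0 <;> by_cases h2 : G.tgt e = v0 <;>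
    simp [h1, h2, hg]

lemma bigMatK_det_ne_zero (G : Multigraph E V) (v0 : V) (hconn : G.Connected) :
    (G.bigMatK v0 (∅ : Finset E)).det ≠ 0 := by
  classical
  set φ : MvPolynomial E ℚ →+* ℚ := MvPolynomial.eval (fun _ => (1:ℚ)) with hφ
  intro h0
  have h1 : det (φ.mapMatrix (G.bigMatK v0 ∅)) = 0 := by
    rw [← RingHom.map_det, h0, map_zero]
  set Em : Matrix E {v : V // v ≠ v0} ℚ := Matrix.of fun e v => G.inc ℚ e ↑v with hEm
  have h2 : φ.mapMatrix (G.bigMatK v0 ∅) = Matrix.fromBlocks 1 Em (-Emᵀ) 0 := by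
    ext (e | v) (f | w) <;>
      simp [bigMatK, Multigraph.inc, RingHom.mapMatrix_apply, Matrix.map_apply,
        Matrix.diagonal, Matrix.one_apply, apply_ite φ, hEm, hφ,
          apply_ite (MvPolynomial.eval fun _ => (1:ℚ))]
  rw [h2, Matrix.det_fromBlocks_one₁₁] at h1
  have h3 : (0 : Matrix _ _ ℚ) - (-Emᵀ) * Em = Emᵀ * Em := by
    rw [Matrix.neg_mul, sub_neg_eq_add, zero_add]
  rw [h3] at h1
  obtain ⟨y, hy0, hy⟩ := Matrix.exists_mulVec_eq_zero_iff.mpr h1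
  have hz : Em *ᵥ y = 0 := by
    have hdot : (Em *ᵥ y) ⬝ᵥ (Em *ᵥ y) = 0 := by
      rw [dotProduct_mulVec, ← Matrix.mulVec_transpose, Matrix.mulVec_mulVec, hy,
        zero_dotProduct]
    funext e
    have h4 : ∑ w, (Em *ᵥ y) w * (Em *ᵥ y) w = 0 := hdot
    have h5 := (Finset.sum_eq_zero_iff_of_nonneg
      (fun i _ => mul_self_nonneg ((Em *ᵥ y) i))).mp h4 e (Finset.mem_univ e)
    exact mul_self_eq_zero.mp h5
  set g : V → ℚ := fun u => if h : u = v0 then 0 else y ⟨u, h⟩ with hgdef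
  have hgv0 : g v0 = 0 := by simp [hgdef]
  have hedge : ∀ e, g (G.src e) = g (G.tgt e) := by
    intro e
    have he : ∑ v : {v : V // v ≠ v0}, g ↑v * G.inc ℚ e ↑v = 0 := by
      have he2 := congrFun hz e
      rw [Matrix.mulVec, Pi.zero_apply] at he2
      rw [← he2]
      apply Finset.sum_congr rfl
      intro v _
      rw [mul_comm]
      congr 1
      simp [hgdef, v.prop]
    rw [sum_inc_eq G v0 g hgv0 e] at he
    linarith
  have hreach : ∀ u w : V, G.Reach Finset.univ u w → g u = g w := by
    intro u w h
    induction h with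
    | refl => rfl
    | tail h1 h2 ih =>
      obtain ⟨e, _, h3 | h3⟩ := h2
      · rw [ih, ← h3.1, ← h3.2, hedge e]
      · rw [ih, ← h3.1, ← h3.2, hedge e]
  apply hy0
  funext v
  have h6 : g ↑v = g v0 := hreach ↑v v0 (hconn ↑v v0)
  rw [hgv0] at h6
  rw [hgdef] at h6
  simpa [v.prop] using h6

end Multigraph
namespace Multigraph

open Matrix

set_option linter.unusedSectionVars false

variable {E V : Type*} [Fintype E] [LinearOrder E] [Fintype V] [DecidableEq V]

lemma adjugate_bigMatK_symm (G : Multigraph E V) (v0 : V) (e f : E) :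
    (G.bigMatK v0 (∅ : Finset E)).adjugate (Sum.inl e) (Sum.inl f)
      = (G.bigMatK v0 (∅ : Finset E)).adjugate (Sum.inl f) (Sum.inl e) := by
  classical
  set M := G.bigMatK v0 (∅ : Finset E) with hM
  set σ : E ⊕ {v : V // v ≠ v0} → MvPolynomial E ℚ := Sum.elim (fun _ => 1) (fun _ => -1)
    with hσ
  set S : Matrix (E ⊕ {v : V // v ≠ v0}) (E ⊕ {v : V // v ≠ v0}) (MvPolynomial E ℚ) :=
    Matrix.diagonal σ with hS
  have hSS : S * S = 1 := by
    rw [hS, Matrix.diagonal_mul_diagonal]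
    have h : (fun i => σ i * σ i) = fun _ => (1 : MvPolynomial E ℚ) := by
      funext x
      rcases x with x | x <;> simp [hσ]
    rw [h, Matrix.diagonal_one]
  have hMT : Mᵀ = S * M * S := by
    have key : ∀ x y, Mᵀ x y = σ x * M x y * σ y := by
      rintro (x | x) (y | y) <;>
        simp [hM, hσ, bigMatK, Matrix.transpose_apply, Matrix.diagonal] <;>
        split_ifs <;> simp_all
    refine Matrix.ext fun x y => ?_
    rw [hS, Matrix.mul_diagonal, Matrix.diagonal_mul]
    exact key x y
  have hadjS : S.adjugate = S.det • S := by
    calc S.adjugate = 1 * S.adjugate := (one_mul _).symm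
      _ = (S * S) * S.adjugate := by rw [hSS]
      _ = S * (S * S.adjugate) := by rw [Matrix.mul_assoc]
      _ = S * (S.det • 1) := by rw [Matrix.mul_adjugate]
      _ = S.det • S := by rw [Matrix.mul_smul, Matrix.mul_one]
  have hdetS2 : S.det * S.det = 1 := by
    rw [← Matrix.det_mul, hSS, Matrix.det_one]
  have hadjMT : M.adjugateᵀ = S * M.adjugate * S := by
    rw [Matrix.adjugate_transpose, hMT, Matrix.adjugate_mul_distrib,
      Matrix.adjugate_mul_distrib, hadjS]
    calc (S.det • S) * (M.adjugate * (S.det • S))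
        = (S.det * S.det) • (S * (M.adjugate * S)) := by
          rw [Matrix.mul_smul, Matrix.smul_mul, Matrix.mul_smul, smul_smul]
      _ = S * M.adjugate * S := by rw [hdetS2, one_smul, Matrix.mul_assoc]
  have h1 : M.adjugate (Sum.inl f) (Sum.inl e) = M.adjugateᵀ (Sum.inl e) (Sum.inl f) := rfl
  rw [h1, hadjMT, hS, Matrix.mul_diagonal, Matrix.diagonal_mul]
  simp [hσ]

end Multigraph
namespace Multigraph

open Matrix

set_option linter.unusedSectionVars false
set_option maxHeartbeats 4000000

variable {E V : Type*} [Fintype E] [LinearOrder E] [Fintype V] [DecidableEq V]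

lemma det_cross_zero (G : Multigraph E V) (hconn : G.Connected) (v0 : V)
    (S1 S2 : Finset V) (v1 v2 : V) (hv : v1 ≠ v2)
    (hcover : S1 ∪ S2 = Finset.univ) (hinter : S1 ∩ S2 = {v1, v2})
    (E1 E2 : Finset E) (hEcover : E1 ∪ E2 = Finset.univ) (hEdisj : Disjoint E1 E2)
    (hend1 : ∀ e ∈ E1, G.src e ∈ S1 ∧ G.tgt e ∈ S1)
    (hend2 : ∀ e ∈ E2, G.src e ∈ S2 ∧ G.tgt e ∈ S2)
    (a b c d : E) (ha : a ∈ E1) (hb : b ∈ E1) (hc : c ∈ E2) (hd : d ∈ E2) (hab : a ≠ b)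
    (hcd : c ≠ d) :
    (((G.bigMatK v0 (∅ : Finset E)).updateRow (Sum.inl a)
        (Pi.single (Sum.inl c) 1)).updateRow (Sum.inl b) (Pi.single (Sum.inl d) 1)).det
      = 0 := by
  classical
  -- basic membership facts
  have hmemS : ∀ v : V, v ∈ S1 ∨ v ∈ S2 := by
    intro v
    have : v ∈ S1 ∪ S2 := by rw [hcover]; exact Finset.mem_univ v
    exact Finset.mem_union.mp this
  have hS1S2 : ∀ v, v ∈ S1 → v ∈ S2 → v = v1 ∨ v = v2 := by
    intro v h1 h2
    have : v ∈ S1 ∩ S2 := Finset.mem_inter.mpr ⟨h1, h2⟩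
    rw [hinter] at this
    simpa using this
  have hv1 : v1 ∈ S1 ∧ v1 ∈ S2 := by
    have : v1 ∈ S1 ∩ S2 := by rw [hinter]; simp
    exact Finset.mem_inter.mp this
  have hv2 : v2 ∈ S1 ∧ v2 ∈ S2 := by
    have : v2 ∈ S1 ∩ S2 := by rw [hinter]; simp
    exact Finset.mem_inter.mp this
  have hE12 : ∀ e ∈ E1, e ∉ E2 := fun e he => Finset.disjoint_left.mp hEdisj he
  have hmemE : ∀ e : E, e ∉ E2 → e ∈ E1 := by
    intro e he
    have : e ∈ E1 ∪ E2 := by rw [hEcover]; exact Finset.mem_univ e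
    rcases Finset.mem_union.mp this with h | h
    · exact h
    · exact absurd h he
  -- the field of fractions
  set K := FractionRing (MvPolynomial E ℚ) with hK
  set alg : MvPolynomial E ℚ →+* K := algebraMap (MvPolynomial E ℚ) K with halgdef
  have halg : Function.Injective alg := IsFractionRing.injective (MvPolynomial E ℚ) K
  set M := G.bigMatK v0 (∅ : Finset E) with hM
  set MK : Matrix (E ⊕ {v : V // v ≠ v0}) (E ⊕ {v : V // v ≠ v0}) K := alg.mapMatrix M
    with hMK
  have hdetK : MK.det ≠ 0 := by
    rw [hMK, ← RingHom.map_det]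
    intro h
    exact bigMatK_det_ne_zero G v0 hconn (halg (by rw [h, map_zero]))
  -- entries of MK
  have hMKee : ∀ e f : E, MK (Sum.inl e) (Sum.inl f)
      = if e = f then alg (MvPolynomial.X e) else 0 := by
    intro e f
    simp [hMK, hM, bigMatK, RingHom.mapMatrix_apply, Matrix.map_apply, Matrix.diagonal,
      apply_ite alg]
  have hMKev : ∀ (e : E) (w : {v : V // v ≠ v0}), MK (Sum.inl e) (Sum.inr w)
      = G.inc K e ↑w := by
    intro e w
    simp [hMK, hM, bigMatK, RingHom.mapMatrix_apply, Matrix.map_apply, Multigraph.inc,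
      apply_ite alg]
  have hMKve : ∀ (w : {v : V // v ≠ v0}) (e : E), MK (Sum.inr w) (Sum.inl e)
      = -G.inc K e ↑w := by
    intro w e
    simp [hMK, hM, bigMatK, RingHom.mapMatrix_apply, Matrix.map_apply, Multigraph.inc,
      apply_ite alg]
  have hMKvv : ∀ w w' : {v : V // v ≠ v0}, MK (Sum.inr w) (Sum.inr w') = 0 := by
    intro w w'
    simp [hMK, hM, bigMatK, RingHom.mapMatrix_apply, Matrix.map_apply]
  -- the parameter space
  set U₁ : Finset V := (S2 \ S1).erase v0 with hU₁
  set U : Finset V := if v0 ∈ S1 then U₁ else insert v1 U₁ with hU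
  have hU₁U : U₁ ⊆ U := by
    rw [hU]
    split_ifs
    · exact Finset.Subset.refl _
    · exact Finset.subset_insert _ _
  have hU₁S1 : ∀ u ∈ U₁, u ∉ S1 := by
    intro u hu
    exact (Finset.mem_sdiff.mp (Finset.mem_of_mem_erase hu)).2
  have hU₁S2 : ∀ u ∈ U₁, u ∈ S2 := by
    intro u hu
    exact (Finset.mem_sdiff.mp (Finset.mem_of_mem_erase hu)).1
  have hUne : ∀ u ∈ U, u ≠ v0 := by
    intro u hu
    rw [hU] at hu
    by_cases h : v0 ∈ S1
    · rw [if_pos h] at hu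
      exact Finset.ne_of_mem_erase hu
    · rw [if_neg h] at hu
      rcases Finset.mem_insert.mp hu with h1 | h1
      · subst h1
        intro h2
        exact h (h2 ▸ hv1.1)
      · exact Finset.ne_of_mem_erase h1
  have hv1U₁ : v1 ∉ U₁ := by
    intro h
    exact hU₁S1 v1 h hv1.1
  -- the vector-building maps
  set ψf : ((U → K) × K × K) → V → K := fun x v =>
    (if h : v ∈ U₁ then x.1 ⟨v, hU₁U h⟩ else 0)
      + (if v ∈ S1 then (if h : v1 ∈ U then x.1 ⟨v1, h⟩ else 0) else 0) with hψf
  set uf : ((U → K) × K × K) → (E ⊕ {v : V // v ≠ v0}) → K := fun x => Sum.elim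
    (fun e => if e ∈ E2 then (alg (MvPolynomial.X e))⁻¹ *
      (ψf x (G.src e) - ψf x (G.tgt e)
        + (if e = c then x.2.1 else 0) + (if e = d then x.2.2 else 0)) else 0)
    (fun v => ψf x ↑v) with huf
  have hψv0 : ∀ x, ψf x v0 = 0 := by
    intro x
    rw [hψf]
    simp only
    rw [dif_neg (fun h => Finset.notMem_erase v0 _ h)]
    by_cases h : v0 ∈ S1
    · rw [if_pos h, zero_add]
      have hv1U : v1 ∉ U := by
        rw [hU, if_pos h]
        exact hv1U₁
      rw [dif_neg hv1U]
    · rw [if_neg h, zero_add]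
  have hψS1 : ∀ x, ∀ v ∈ S1, ∀ w ∈ S1, ψf x v = ψf x w := by
    intro x v hvS w hwS
    rw [hψf]
    simp only
    rw [dif_neg (fun h => hU₁S1 v h hvS), dif_neg (fun h => hU₁S1 w h hwS),
      if_pos hvS, if_pos hwS]
  have hufE1 : ∀ x, ∀ e ∈ E1, uf x (Sum.inl e) = 0 := by
    intro x e he
    rw [huf]
    simp only [Sum.elim_inl]
    rw [if_neg (hE12 e he)]
  -- additivity and homogeneity
  have hψadd : ∀ x y, ψf (x + y) = ψf x + ψf y := by
    intro x y
    funext v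
    rw [hψf]
    simp only [Prod.fst_add, Pi.add_apply]
    split_ifs <;> ring
  have hψsmul : ∀ (r : K) (x), ψf (r • x) = r • ψf x := by
    intro r x
    funext v
    rw [hψf]
    simp only [Prod.smul_fst, Pi.smul_apply, smul_eq_mul]
    split_ifs <;> ring
  have hufadd : ∀ x y, uf (x + y) = uf x + uf y := by
    intro x y
    funext r
    rcases r with e | w
    · simp only [huf, Sum.elim_inl, hψadd, Pi.add_apply, Prod.snd_add, Prod.fst_add]
      split_ifs <;> ring
    · simp only [huf, Sum.elim_inr, hψadd, Pi.add_apply]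
  have hufsmul : ∀ (r : K) (x), uf (r • x) = r • uf x := by
    intro r x
    funext s
    rcases s with e | w
    · simp only [huf, Sum.elim_inl, hψsmul, Pi.smul_apply, Prod.smul_snd, Prod.smul_fst,
        smul_eq_mul]
      split_ifs <;> ring
    · simp only [huf, Sum.elim_inr, hψsmul, Pi.smul_apply, smul_eq_mul]
  -- the conservation map
  set Θ : ((U → K) × K × K) →ₗ[K] ((S2.erase v0) → K) :=
    { toFun := fun x w => (uf x ᵥ* MK) (Sum.inr ⟨(w : V), Finset.ne_of_mem_erase w.prop⟩)
      map_add' := by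
        intro x y
        funext w
        simp only [hufadd, Matrix.add_vecMul, Pi.add_apply]
      map_smul' := by
        intro r x
        funext w
        simp only [hufsmul, Matrix.smul_vecMul, Pi.smul_apply, RingHom.id_apply] } with hΘ
  have halgX : ∀ e : E, alg (MvPolynomial.X e) ≠ 0 := by
    intro e h
    exact MvPolynomial.X_ne_zero e (halg (by rw [h, map_zero]))
  -- the key computation of the row combination
  have hvecMul : ∀ x : ((U → K) × K × K), Θ x = 0 →
      uf x ᵥ* MK = fun col => (if col = Sum.inl c then x.2.1 else 0)
        + (if col = Sum.inl d then x.2.2 else 0) := by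
    intro x hx
    funext col
    have hsum : (uf x ᵥ* MK) col = (∑ e : E, uf x (Sum.inl e) * MK (Sum.inl e) col)
        + (∑ w : {v : V // v ≠ v0}, uf x (Sum.inr w) * MK (Sum.inr w) col) := by
      simp [Matrix.vecMul, dotProduct, Fintype.sum_sum_type]
    rcases col with f | w
    · -- edge column
      have h1 : ∑ e : E, uf x (Sum.inl e) * MK (Sum.inl e) (Sum.inl f)
          = uf x (Sum.inl f) * alg (MvPolynomial.X f) := by
        rw [← Fintype.sum_ite_eq' f (fun e => uf x (Sum.inl e) * alg (MvPolynomial.X e))]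
        apply Finset.sum_congr rfl
        intro e _
        rw [hMKee]
        split_ifs with h
        · subst h; rfl
        · rw [mul_zero]
      have h2 : ∑ w : {v : V // v ≠ v0}, uf x (Sum.inr w) * MK (Sum.inr w) (Sum.inl f)
          = -(ψf x (G.src f) - ψf x (G.tgt f)) := by
        have : ∀ w : {v : V // v ≠ v0}, uf x (Sum.inr w) * MK (Sum.inr w) (Sum.inl f)
            = -(ψf x ↑w * G.inc K f ↑w) := by
          intro w
          rw [hMKve, huf]
          simp only [Sum.elim_inr]
          ring
        rw [Finset.sum_congr rfl (fun w _ => this w), Finset.sum_neg_distrib,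
          sum_inc_eq G v0 (ψf x) (hψv0 x) f]
      rw [hsum, h1, h2]
      by_cases hf2 : f ∈ E2
      · have h3 : uf x (Sum.inl f) = (alg (MvPolynomial.X f))⁻¹ *
            (ψf x (G.src f) - ψf x (G.tgt f)
              + (if f = c then x.2.1 else 0) + (if f = d then x.2.2 else 0)) := by
          rw [huf]
          simp only [Sum.elim_inl]
          rw [if_pos hf2]
        rw [h3, inv_mul_eq_div, div_mul_eq_mul_div, mul_div_assoc,
          div_self (halgX f), mul_one]
        simp only [Sum.inl.injEq]
        ring
      · have h3 : uf x (Sum.inl f) = 0 := by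
          rw [huf]; simp only [Sum.elim_inl]; rw [if_neg hf2]
        have hf1 : f ∈ E1 := hmemE f hf2
        have h4 : ψf x (G.src f) = ψf x (G.tgt f) :=
          hψS1 x _ (hend1 f hf1).1 _ (hend1 f hf1).2
        have hfc : f ≠ c := fun h => hf2 (h ▸ hc)
        have hfd : f ≠ d := fun h => hf2 (h ▸ hd)
        rw [h3, h4, zero_mul, sub_self, neg_zero, zero_add]
        simp [Sum.inl.injEq, hfc, hfd]
    · -- vertex column
      have hRHS : ((if (Sum.inr w : E ⊕ {v : V // v ≠ v0}) = Sum.inl c then x.2.1 else 0)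
          + (if (Sum.inr w : E ⊕ {v : V // v ≠ v0}) = Sum.inl d then x.2.2 else 0)) = 0 := by
        simp
      rw [hRHS]
      by_cases hw2 : (w : V) ∈ S2
      · have hmem : (w : V) ∈ S2.erase v0 := Finset.mem_erase.mpr ⟨w.prop, hw2⟩
        have := congrFun hx ⟨(w : V), hmem⟩
        simp only [Pi.zero_apply] at this
        rw [← this, hΘ]
        simp only [LinearMap.coe_mk, AddHom.coe_mk]
      · rw [hsum]
        have h1 : ∑ e : E, uf x (Sum.inl e) * MK (Sum.inl e) (Sum.inr w) = 0 := by
          apply Finset.sum_eq_zero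
          intro e _
          by_cases he2 : e ∈ E2
          · have hsrc : G.src e ≠ (w : V) := fun h => hw2 (h ▸ (hend2 e he2).1)
            have htgt : G.tgt e ≠ (w : V) := fun h => hw2 (h ▸ (hend2 e he2).2)
            rw [hMKev, Multigraph.inc, if_neg hsrc, if_neg htgt, sub_zero, mul_zero]
          · have : uf x (Sum.inl e) = 0 := by
              rw [huf]; simp only [Sum.elim_inl]; rw [if_neg he2]
            rw [this, zero_mul]
        have h2 : ∑ w' : {v : V // v ≠ v0}, uf x (Sum.inr w') * MK (Sum.inr w') (Sum.inr w)
            = 0 := by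
          apply Finset.sum_eq_zero
          intro w' _
          rw [hMKvv, mul_zero]
        rw [h1, h2, add_zero]
  -- cardinalities
  have hcardInter : (S2 ∩ S1).card = 2 := by
    rw [Finset.inter_comm, hinter]
    exact Finset.card_pair hv
  have hsd : (S2 ∩ S1).card + (S2 \ S1).card = S2.card :=
    Finset.card_inter_add_card_sdiff S2 S1
  have hcardU : U.card + 2 = S2.card := by
    by_cases hv0S1 : v0 ∈ S1
    · have hU' : U = S2 \ S1 := by
        rw [hU, if_pos hv0S1, hU₁, Finset.erase_eq_of_notMem]
        intro h
        exact (Finset.mem_sdiff.mp h).2 hv0S1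
      rw [hU']
      omega
    · have hv0S2 : v0 ∈ S2 := (hmemS v0).resolve_left hv0S1
      have hv0sd : v0 ∈ S2 \ S1 := Finset.mem_sdiff.mpr ⟨hv0S2, hv0S1⟩
      have h1 : U₁.card + 1 = (S2 \ S1).card := Finset.card_erase_add_one hv0sd
      have h2 : U.card = U₁.card + 1 := by
        rw [hU, if_neg hv0S1]
        exact Finset.card_insert_of_notMem hv1U₁
      omega
  have hfinrankD : Module.finrank K ((U → K) × K × K) = U.card + 2 := by
    rw [Module.finrank_prod, Module.finrank_prod, Module.finrank_pi, Module.finrank_self,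
      Fintype.card_coe]
  -- existence of a kernel element
  have hker : ∃ x : ((U → K) × K × K), x ≠ 0 ∧ Θ x = 0 := by
    by_cases hv0S2 : v0 ∈ S2
    · apply exists_ne_zero_map_eq_zero
      rw [hfinrankD, Module.finrank_pi, Fintype.card_coe, Finset.card_erase_of_mem hv0S2]
      omega
    · -- the image lies in the hyperplane of vectors with zero coordinate sum
      have hS2e : S2.erase v0 = S2 := Finset.erase_eq_of_notMem hv0S2
      have hsumzero : ∀ x, sumCoords (K := K) (S2.erase v0) (Θ x) = 0 := by
        intro x
        have hΘw : ∀ w : (S2.erase v0 : Finset V),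
            Θ x w = ∑ e : E, uf x (Sum.inl e) * G.inc K e ↑w := by
          intro w
          rw [hΘ]
          simp only [LinearMap.coe_mk, AddHom.coe_mk]
          have hsum2 : ∀ col, (uf x ᵥ* MK) col
              = (∑ e : E, uf x (Sum.inl e) * MK (Sum.inl e) col)
              + (∑ w' : {v : V // v ≠ v0}, uf x (Sum.inr w') * MK (Sum.inr w') col) := by
            intro col
            simp [Matrix.vecMul, dotProduct, Fintype.sum_sum_type]
          rw [hsum2]
          have h2 : ∑ w' : {v : V // v ≠ v0}, uf x (Sum.inr w')
              * MK (Sum.inr w') (Sum.inr ⟨(w : V), Finset.ne_of_mem_erase w.prop⟩) = 0 := by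
            apply Finset.sum_eq_zero
            intro w' _
            rw [hMKvv, mul_zero]
          rw [h2, add_zero]
          apply Finset.sum_congr rfl
          intro e _
          rw [hMKev]
        show (∑ w : (S2.erase v0 : Finset V), Θ x w) = 0
        rw [Finset.sum_congr rfl (fun w _ => hΘw w), Finset.sum_comm]
        apply Finset.sum_eq_zero
        intro e _
        by_cases he2 : e ∈ E2
        · rw [← Finset.mul_sum]
          have hz : ∑ w : (S2.erase v0 : Finset V), G.inc K e ↑w = 0 := by
            rw [Finset.sum_coe_sort (S2.erase v0) (fun w => G.inc K e w), hS2e]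
            have h3 : ∀ w ∈ S2, G.inc K e w
                = (if G.src e = w then (1:K) else 0) - (if G.tgt e = w then (1:K) else 0) :=
              fun w _ => rfl
            rw [Finset.sum_congr rfl h3, Finset.sum_sub_distrib, Finset.sum_ite_eq,
              Finset.sum_ite_eq, if_pos (hend2 e he2).1, if_pos (hend2 e he2).2, sub_self]
          rw [hz, mul_zero]
        · apply Finset.sum_eq_zero
          intro w _
          have : uf x (Sum.inl e) = 0 := by
            rw [huf]; simp only [Sum.elim_inl]; rw [if_neg he2]
          rw [this, zero_mul]
      set Θ' : ((U → K) × K × K) →ₗ[K] (LinearMap.ker (sumCoords (K := K) (S2.erase v0))) :=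
        Θ.codRestrict _ (fun x => LinearMap.mem_ker.mpr (hsumzero x)) with hΘ'
      have hne : Nonempty (S2.erase v0 : Finset V) := by
        refine ⟨⟨v1, ?_⟩⟩
        rw [hS2e]
        exact hv1.2
      obtain ⟨x, hx0, hx⟩ := exists_ne_zero_map_eq_zero Θ'
        (by
          rw [hfinrankD, finrank_ker_sumCoords, Fintype.card_coe, hS2e]
          omega)
      refine ⟨x, hx0, ?_⟩
      have := congrArg Subtype.val hx
      exact this
  obtain ⟨x, hx0, hxΘ⟩ := hker
  have hvM := hvecMul x hxΘ
  -- recovering the parameters from ψ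
  have hψrec : ∀ (v : V) (h : v ∈ U), ψf x v = x.1 ⟨v, h⟩ := by
    intro v h
    by_cases h1 : v ∈ U₁
    · rw [hψf]
      simp only
      rw [dif_pos h1, if_neg (hU₁S1 v h1), add_zero]
    · have hcase : v0 ∉ S1 ∧ v = v1 := by
        rw [hU] at h
        by_cases h2 : v0 ∈ S1
        · rw [if_pos h2] at h
          exact absurd h h1
        · rw [if_neg h2] at h
          rcases Finset.mem_insert.mp h with h3 | h3
          · exact ⟨h2, h3⟩
          · exact absurd h3 h1
      obtain ⟨hns1, rfl⟩ := hcase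
      rw [hψf]
      simp only
      rw [dif_neg h1, if_pos hv1.1, dif_pos h, zero_add]
  -- (lambda, mu) is nonzero
  have hor : x.2.1 ≠ 0 ∨ x.2.2 ≠ 0 := by
    by_contra h
    push_neg at h
    have hufx : uf x ᵥ* MK = 0 := by
      rw [hvM]
      funext col
      simp [h.1, h.2]
    have ht : x.1 ≠ 0 := by
      intro h1
      apply hx0
      rw [Prod.ext_iff, Prod.ext_iff]
      exact ⟨h1, h.1, h.2⟩
    obtain ⟨u, hu⟩ := Function.ne_iff.mp ht
    have hufne : uf x ≠ 0 := by
      intro h2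
      apply hu
      have h3 := congrFun h2 (Sum.inr ⟨(u : V), hUne (u : V) u.prop⟩)
      rw [huf] at h3
      simp only [Sum.elim_inr, Pi.zero_apply] at h3
      rw [hψrec (u : V) u.prop] at h3
      exact h3
    exact hdetK (Matrix.exists_vecMul_eq_zero_iff.mp ⟨uf x, hufne, hufx⟩)
  -- the matrix with two replaced rows is singular
  set A3 := ((M.updateRow (Sum.inl a) (Pi.single (Sum.inl c) 1)).updateRow (Sum.inl b)
    (Pi.single (Sum.inl d) 1)) with hA3
  have hup : ∀ (B : Matrix (E ⊕ {v : V // v ≠ v0}) (E ⊕ {v : V // v ≠ v0})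
      (MvPolynomial E ℚ)) (i j),
      alg.mapMatrix (B.updateRow i (Pi.single j 1))
        = (alg.mapMatrix B).updateRow i (Pi.single j 1) := by
    intro B i j
    refine Matrix.ext fun r s => ?_
    by_cases h : r = i
    · subst h
      simp [RingHom.mapMatrix_apply, Matrix.map_apply, Matrix.updateRow_self,
        Pi.single_apply, apply_ite alg]
    · simp [RingHom.mapMatrix_apply, Matrix.map_apply, Matrix.updateRow_ne h]
  set A3K := ((MK.updateRow (Sum.inl a) (Pi.single (Sum.inl c) 1)).updateRow (Sum.inl b)
    (Pi.single (Sum.inl d) 1)) with hA3K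
  have hmapA3 : alg.mapMatrix A3 = A3K := by
    rw [hA3, hup, hup, hA3K, hMK]
  have hab' : (Sum.inl a : E ⊕ {v : V // v ≠ v0}) ≠ Sum.inl b :=
    fun h => hab (Sum.inl.inj h)
  have hrow_a : A3K (Sum.inl a) = Pi.single (Sum.inl c) 1 := by
    rw [hA3K, Matrix.updateRow_ne hab', Matrix.updateRow_self]
  have hrow_b : A3K (Sum.inl b) = Pi.single (Sum.inl d) 1 := by
    rw [hA3K, Matrix.updateRow_self]
  set wv : (E ⊕ {v : V // v ≠ v0}) → K := uf x + (-x.2.1) • Pi.single (Sum.inl a) 1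
    + (-x.2.2) • Pi.single (Sum.inl b) 1 with hwv
  have hufa : uf x (Sum.inl a) = 0 := hufE1 x a ha
  have hufb : uf x (Sum.inl b) = 0 := hufE1 x b hb
  have hwv0 : wv ≠ 0 := by
    rcases hor with hl | hl
    · intro h
      have h2 := congrFun h (Sum.inl a)
      rw [hwv] at h2
      simp only [Pi.add_apply, Pi.smul_apply, Pi.zero_apply, smul_eq_mul] at h2
      rw [hufa, Pi.single_eq_same, Pi.single_eq_of_ne hab'] at h2
      exact hl (by linear_combination -h2)
    · intro h
      have h2 := congrFun h (Sum.inl b)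
      rw [hwv] at h2
      simp only [Pi.add_apply, Pi.smul_apply, Pi.zero_apply, smul_eq_mul] at h2
      rw [hufb, Pi.single_eq_same, Pi.single_eq_of_ne (Ne.symm hab')] at h2
      exact hl (by linear_combination -h2)
  have hufA3 : uf x ᵥ* A3K = uf x ᵥ* MK := by
    funext col
    simp only [Matrix.vecMul, dotProduct]
    apply Finset.sum_congr rfl
    intro r _
    rcases eq_or_ne r (Sum.inl a) with h | h
    · subst h
      rw [hufa, zero_mul, zero_mul]
    rcases eq_or_ne r (Sum.inl b) with h2 | h2
    · subst h2
      rw [hufb, zero_mul, zero_mul]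
    · have h3 : A3K r = MK r := by
        rw [hA3K, Matrix.updateRow_ne h2, Matrix.updateRow_ne h]
      rw [h3]
  have hwvA3 : wv ᵥ* A3K = 0 := by
    rw [hwv, Matrix.add_vecMul, Matrix.add_vecMul, Matrix.smul_vecMul, Matrix.smul_vecMul,
      vecMul_single_one, vecMul_single_one, hrow_a, hrow_b, hufA3, hvM]
    funext col
    have hcd' : (Sum.inl c : E ⊕ {v : V // v ≠ v0}) ≠ Sum.inl d :=
      fun h => hcd (Sum.inl.inj h)
    simp only [Pi.add_apply, Pi.smul_apply, Pi.single_apply, Pi.zero_apply, smul_eq_mul]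
    by_cases h1 : col = Sum.inl c
    · subst h1
      rw [if_pos rfl, if_neg hcd', if_pos rfl, if_neg hcd']
      ring
    · by_cases h2 : col = Sum.inl d
      · subst h2
        rw [if_neg h1, if_pos rfl, if_neg h1, if_pos rfl]
        ring
      · rw [if_neg h1, if_neg h2, if_neg h1, if_neg h2]
        ring
  have hdetA3K : A3K.det = 0 :=
    Matrix.exists_vecMul_eq_zero_iff.mp ⟨wv, hwv0, hwvA3⟩
  apply halg
  rw [RingHom.map_det, hmapA3, hdetA3K, map_zero]




end Multigraph
namespace Multigraph

open Matrix

set_option linter.unusedSectionVars false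
set_option maxHeartbeats 1000000

variable {E V : Type*} [Fintype E] [LinearOrder E] [Fintype V] [DecidableEq V]

lemma det_sub_update {W : Type*} [Fintype W] [DecidableEq W] {R' : Type*} [CommRing R']
    (A : Matrix (E ⊕ W) (E ⊕ W) R') (p q r s : E) (hpq : p ≠ q) (hrs : r ≠ s)
    {k : ℕ} (fI fJ : Fin k → E) (hfI : Function.Injective fI) (hfJ : Function.Injective fJ)
    (hfIp : ∀ i, fI i ≠ p) (hfIq : ∀ i, fI i ≠ q)
    (hfJr : ∀ j, fJ j ≠ r) (hfJs : ∀ j, fJ j ≠ s)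
    (hk : k + 2 = Fintype.card E) :
    ∃ ε : R', (ε = 1 ∨ ε = -1) ∧
      Matrix.det (Matrix.of fun (x y : Fin k ⊕ W) =>
        A (Sum.map fI id x) (Sum.map fJ id y))
      = ε * (((A.updateRow (Sum.inl p) (Pi.single (Sum.inl r) 1)).updateRow (Sum.inl q)
          (Pi.single (Sum.inl s) 1)).det) := by
  classical
  set A' := ((A.updateRow (Sum.inl p) (Pi.single (Sum.inl r) 1)).updateRow (Sum.inl q)
    (Pi.single (Sum.inl s) 1)) with hA'
  have hpq' : (Sum.inl p : E ⊕ W) ≠ Sum.inl q := fun h => hpq (Sum.inl.inj h)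
  have hrs' : (Sum.inl r : E ⊕ W) ≠ Sum.inl s := fun h => hrs (Sum.inl.inj h)
  have hrow_p : A' (Sum.inl p) = Pi.single (Sum.inl r) 1 := by
    rw [hA', Matrix.updateRow_ne hpq', Matrix.updateRow_self]
  have hrow_q : A' (Sum.inl q) = Pi.single (Sum.inl s) 1 := by
    rw [hA', Matrix.updateRow_self]
  have hrow_other : ∀ x : Fin k ⊕ W, A' (Sum.map fI id x) = A (Sum.map fI id x) := by
    intro x
    have h1 : (Sum.map fI id x : E ⊕ W) ≠ Sum.inl p := by
      rcases x with i | w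
      · exact fun h => hfIp i (Sum.inl.inj h)
      · simp
    have h2 : (Sum.map fI id x : E ⊕ W) ≠ Sum.inl q := by
      rcases x with i | w
      · exact fun h => hfIq i (Sum.inl.inj h)
      · simp
    rw [hA', Matrix.updateRow_ne h2, Matrix.updateRow_ne h1]
  -- row and column equivalences
  have hbij : ∀ (g : Fin 2 → E) (f : Fin k → E), Function.Injective f →
      (∀ i, f i ≠ g 0) → (∀ i, f i ≠ g 1) → (g 0 ≠ g 1) →
      Function.Bijective (Sum.elim (fun u : Fin 2 => (Sum.inl (g u) : E ⊕ W))
        (Sum.map f id)) := by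
    intro g f hf h0 h1 hg
    rw [Fintype.bijective_iff_injective_and_card]
    constructor
    · rintro (u | x) (v | y) huv
      · simp only [Sum.elim_inl, Sum.inl.injEq] at huv
        fin_cases u <;> fin_cases v <;> simp_all
      · exfalso
        rcases y with j | w
        · simp only [Sum.elim_inl, Sum.elim_inr, Sum.map_inl, Sum.inl.injEq] at huv
          fin_cases u
          · exact h0 j huv.symm
          · exact h1 j huv.symm
        · simp at huv
      · exfalso
        rcases x with j | w
        · simp only [Sum.elim_inl, Sum.elim_inr, Sum.map_inl, Sum.inl.injEq] at huv
          fin_cases v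
          · exact h0 j huv
          · exact h1 j huv
        · simp at huv
      · rcases x with j | w <;> rcases y with j' | w' <;> simp_all
        exact hf huv
    · simp [Fintype.card_sum]
      omega
  set σr : (Fin 2 ⊕ (Fin k ⊕ W)) ≃ (E ⊕ W) :=
    Equiv.ofBijective _ (hbij ![p, q] fI hfI (fun i => hfIp i) (fun i => hfIq i) hpq)
    with hσr
  set σc : (Fin 2 ⊕ (Fin k ⊕ W)) ≃ (E ⊕ W) :=
    Equiv.ofBijective _ (hbij ![r, s] fJ hfJ (fun j => hfJr j) (fun j => hfJs j) hrs)
    with hσc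
  have hblock : A'.submatrix σr σc = Matrix.fromBlocks 1 0
      (Matrix.of fun (x : Fin k ⊕ W) (i : Fin 2) => A' (Sum.map fI id x) (σc (Sum.inl i)))
      (Matrix.of fun (x y : Fin k ⊕ W) => A (Sum.map fI id x) (Sum.map fJ id y)) := by
    ext (u | x) (v | y)
    · have : A'.submatrix σr σc (Sum.inl u) (Sum.inl v)
          = A' (Sum.inl (![p, q] u)) (Sum.inl (![r, s] v)) := rfl
      rw [this]
      fin_cases u <;> fin_cases v <;>
        simp [hrow_p, hrow_q, Pi.single_apply, hrs', Ne.symm hrs', Matrix.one_apply]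
    · have : A'.submatrix σr σc (Sum.inl u) (Sum.inr y)
          = A' (Sum.inl (![p, q] u)) (Sum.map fJ id y) := rfl
      rw [this]
      have hcol : ∀ z : E ⊕ W, z = Sum.map fJ id y → z ≠ Sum.inl r ∧ z ≠ Sum.inl s := by
        rintro z rfl
        rcases y with j | w
        · exact ⟨fun h => hfJr j (Sum.inl.inj h), fun h => hfJs j (Sum.inl.inj h)⟩
        · simp
      obtain ⟨hz1, hz2⟩ := hcol _ rfl
      fin_cases u <;>
        simp [hrow_p, hrow_q, Pi.single_apply, hz1, hz2, Matrix.fromBlocks]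
    · rfl
    · have : A'.submatrix σr σc (Sum.inr x) (Sum.inr y)
          = A' (Sum.map fI id x) (Sum.map fJ id y) := rfl
      rw [this, hrow_other]
      rfl
  obtain ⟨sg, hsg, hdet⟩ := det_submatrix_eq_sign_mul A' σr σc
  refine ⟨(sg : R'), ?_, ?_⟩
  · rcases hsg with h | h <;> simp [h]
  · have h1 : (A'.submatrix σr σc).det
        = Matrix.det (Matrix.of fun (x y : Fin k ⊕ W) =>
            A (Sum.map fI id x) (Sum.map fJ id y)) := by
      rw [hblock, Matrix.det_fromBlocks_zero₁₂, Matrix.det_one, one_mul]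
    rw [← h1, hdet]

end Multigraph
namespace Multigraph

open Matrix

set_option linter.unusedSectionVars false
set_option maxHeartbeats 1000000

variable {E V : Type*} [Fintype E] [LinearOrder E] [Fintype V] [DecidableEq V]

lemma dodgson_eq_sign (G : Multigraph E V) (v0 : V) (p q r s : E) (hpq : p ≠ q)
    (hrs : r ≠ s) :
    ∃ ε : ℚ, (ε = 1 ∨ ε = -1) ∧ G.dodgson v0 {p, q} {r, s} ∅ =
      ε • (((G.bigMatK v0 (∅ : Finset E)).updateRow (Sum.inl p)
        (Pi.single (Sum.inl r) 1)).updateRow (Sum.inl q) (Pi.single (Sum.inl s) 1)).det := by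
  classical
  have hIcard : ({p, q} : Finset E).card = 2 := Finset.card_pair hpq
  have hJcard : ({r, s} : Finset E).card = 2 := Finset.card_pair hrs
  have hIJ : ({p, q} : Finset E).card = ({r, s} : Finset E).card := by
    rw [hIcard, hJcard]
  have hcardE : 2 ≤ Fintype.card E := by
    calc 2 = ({p, q} : Finset E).card := hIcard.symm
      _ ≤ Fintype.card E := Finset.card_le_univ _
  have hkcompl : ({p, q} : Finset E)ᶜ.card + 2 = Fintype.card E := by
    rw [Finset.card_compl, hIcard]
    omega
  set k := ({p, q} : Finset E)ᶜ.card with hk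
  set fI : Fin k → E := fun i => ((({p, q} : Finset E)ᶜ.orderIsoOfFin rfl) i : E) with hfI
  have hJk : ({r, s} : Finset E)ᶜ.card = k := by
    rw [Finset.card_compl, hJcard, hk, Finset.card_compl, hIcard]
  set fJ : Fin k → E := fun j => ((({r, s} : Finset E)ᶜ.orderIsoOfFin hJk) j : E) with hfJ
  have hfImem : ∀ i, fI i ∈ ({p, q} : Finset E)ᶜ := fun i =>
    ((({p, q} : Finset E)ᶜ.orderIsoOfFin rfl) i).prop
  have hfJmem : ∀ j, fJ j ∈ ({r, s} : Finset E)ᶜ := fun j =>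
    ((({r, s} : Finset E)ᶜ.orderIsoOfFin _) j).prop
  have hfIinj : Function.Injective fI := by
    intro i i' h
    have := Subtype.ext (p := fun x => x ∈ ({p, q} : Finset E)ᶜ) h
    exact (({p, q} : Finset E)ᶜ.orderIsoOfFin rfl).injective this
  have hfJinj : Function.Injective fJ := by
    intro i i' h
    have := Subtype.ext (p := fun x => x ∈ ({r, s} : Finset E)ᶜ) h
    exact (({r, s} : Finset E)ᶜ.orderIsoOfFin _).injective this
  have hfIp : ∀ i, fI i ≠ p := by
    intro i h
    have := hfImem i
    rw [h] at this
    simp at this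
  have hfIq : ∀ i, fI i ≠ q := by
    intro i h
    have := hfImem i
    rw [h] at this
    simp at this
  have hfJr : ∀ j, fJ j ≠ r := by
    intro j h
    have := hfJmem j
    rw [h] at this
    simp at this
  have hfJs : ∀ j, fJ j ≠ s := by
    intro j h
    have := hfJmem j
    rw [h] at this
    simp at this
  obtain ⟨ε, hε, heq⟩ := det_sub_update (G.bigMatK v0 (∅ : Finset E)) p q r s hpq hrs
    fI fJ hfIinj hfJinj hfIp hfIq hfJr hfJs hkcompl
  rw [Multigraph.dodgson, dif_pos hIJ]
  rcases hε with h1 | h1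
  · refine ⟨1, Or.inl rfl, ?_⟩
    rw [one_smul]
    rw [h1, one_mul] at heq
    exact heq
  · refine ⟨-1, Or.inr rfl, ?_⟩
    rw [neg_one_smul]
    rw [h1] at heq
    rw [heq]
    ring
end Multigraph
/-- If `G` is a two-vertex join of `G₁` and `G₂`, with edges
`a, b ∈ G₁` and `c, d ∈ G₂` (playing the roles of the edges `1, 2` and `3, 4`), then (with
the consistent sign `ε` for the Dodgson polynomials) the product
`Ψ^{13,24}_G · Ψ^{14,23}_G` is the perfect square `(Ψ^{13,24}_G)²`. -/
theorem two_vertex_join_product_is_square {E V : Type*} [Fintype E] [LinearOrder E]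
    [Fintype V] [DecidableEq V] (G : Multigraph E V) (hconn : G.Connected) (v0 : V)
    (S1 S2 : Finset V) (v1 v2 : V) (hv : v1 ≠ v2)
    (hcover : S1 ∪ S2 = Finset.univ) (hinter : S1 ∩ S2 = {v1, v2})
    (E1 E2 : Finset E) (hEcover : E1 ∪ E2 = Finset.univ) (hEdisj : Disjoint E1 E2)
    (hend1 : ∀ e ∈ E1, G.src e ∈ S1 ∧ G.tgt e ∈ S1)
    (hend2 : ∀ e ∈ E2, G.src e ∈ S2 ∧ G.tgt e ∈ S2)
    (a b c d : E) (ha : a ∈ E1) (hb : b ∈ E1) (hc : c ∈ E2) (hd : d ∈ E2)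
    (hab : a ≠ b) (hcd : c ≠ d) :
    ∃ ε : ℚ, (ε = 1 ∨ ε = -1) ∧
      G.dodgson v0 {a, c} {b, d} ∅ = ε • G.dodgson v0 {a, d} {b, c} ∅ ∧
      G.dodgson v0 {a, c} {b, d} ∅ * (ε • G.dodgson v0 {a, d} {b, c} ∅)
        = (G.dodgson v0 {a, c} {b, d} ∅) ^ 2 := by
  classical
  have hac : a ≠ c := fun h => (Finset.disjoint_left.mp hEdisj ha) (h ▸ hc)
  have had : a ≠ d := fun h => (Finset.disjoint_left.mp hEdisj ha) (h ▸ hd)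
  have hbc : b ≠ c := fun h => (Finset.disjoint_left.mp hEdisj hb) (h ▸ hc)
  have hbd : b ≠ d := fun h => (Finset.disjoint_left.mp hEdisj hb) (h ▸ hd)
  set M := G.bigMatK v0 (∅ : Finset E) with hM
  have hdet : M.det ≠ 0 := Multigraph.bigMatK_det_ne_zero G v0 hconn
  have hac' : (Sum.inl a : E ⊕ {v : V // v ≠ v0}) ≠ Sum.inl c :=
    fun h => hac (Sum.inl.inj h)
  have had' : (Sum.inl a : E ⊕ {v : V // v ≠ v0}) ≠ Sum.inl d :=
    fun h => had (Sum.inl.inj h)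
  have hab' : (Sum.inl a : E ⊕ {v : V // v ≠ v0}) ≠ Sum.inl b :=
    fun h => hab (Sum.inl.inj h)
  have hJ1 := jacobi_two M hdet hac' (Sum.inl b) (Sum.inl d)
  have hJ2 := jacobi_two M hdet had' (Sum.inl b) (Sum.inl c)
  have hJ3 := jacobi_two M hdet hab' (Sum.inl c) (Sum.inl d)
  have hz := Multigraph.det_cross_zero G hconn v0 S1 S2 v1 v2 hv hcover hinter E1 E2
    hEcover hEdisj hend1 hend2 a b c d ha hb hc hd hab hcd
  rw [← hM] at hz
  rw [hz, mul_zero] at hJ3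
  rw [Multigraph.adjugate_bigMatK_symm G v0 d c, Multigraph.adjugate_bigMatK_symm G v0 b c]
    at hJ1
  rw [Multigraph.adjugate_bigMatK_symm G v0 b d] at hJ2
  have hD12 : ((M.updateRow (Sum.inl a) (Pi.single (Sum.inl b) 1)).updateRow (Sum.inl c)
        (Pi.single (Sum.inl d) 1)).det
      = ((M.updateRow (Sum.inl a) (Pi.single (Sum.inl b) 1)).updateRow (Sum.inl d)
        (Pi.single (Sum.inl c) 1)).det := by
    apply mul_left_cancel₀ hdet
    linear_combination hJ1 - hJ2 - hJ3
  obtain ⟨ε₁, hε₁, h1⟩ := Multigraph.dodgson_eq_sign G v0 a c b d hac hbd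
  obtain ⟨ε₂, hε₂, h2⟩ := Multigraph.dodgson_eq_sign G v0 a d b c had hbc
  rw [← hM] at h1 h2
  rw [hD12] at h1
  have hmain : G.dodgson v0 {a, c} {b, d} ∅ = (ε₁ * ε₂) • G.dodgson v0 {a, d} {b, c} ∅ := by
    rw [h1, h2, smul_smul]
    congr 1
    rcases hε₂ with h | h <;> rw [h] <;> ring
  refine ⟨ε₁ * ε₂, ?_, hmain, by rw [← hmain, sq]⟩
  rcases hε₁ with h | h <;> rcases hε₂ with h' | h' <;> rw [h, h'] <;> norm_num
end
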